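/- An infinite word u satisfies property R_2 if and only if u is Sturmian. -/

import Mathlib

variable {A : Type*}

/-- The factor of `u` of length `n` starting at position `j`. -/
def factorAt (u : ℕ → A) (j n : ℕ) : List A :=
  (List.range n).map (fun i => u (j + i))

/-- `j` is an occurrence of the finite word `w` in `u`. -/
def OccursAt (u : ℕ → A) (w : List A) (j : ℕ) : Prop :=
  factorAt u j w.length = w

/-- `w` is a factor of the infinite word `u`. -/
def IsFactor (u : ℕ → A) (w : List A) : Prop :=
  ∃ j, OccursAt u w j

/-- `v` is a return word of `w` in `u`: the word between two successive occurrences of `w`. -/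
def IsReturnWord (u : ℕ → A) (w v : List A) : Prop :=
  ∃ j k, j < k ∧ OccursAt u w j ∧ OccursAt u w k ∧
    (∀ l, j < l → l < k → ¬ OccursAt u w l) ∧ v = factorAt u j (k - j)

/-- The set `R(w)` of return words of `w` in `u`. -/
def returnWords (u : ℕ → A) (w : List A) : Set (List A) :=
  {v | IsReturnWord u w v}

/-- Property `R_m`: every factor of `u` has exactly `m` return words. -/
def PropertyR (u : ℕ → A) (m : ℕ) : Prop :=
  ∀ w, IsFactor u w → (returnWords u w).Finite ∧ (returnWords u w).ncard = m

/-- The set of left extensions of `w`. -/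
def leftExt (u : ℕ → A) (w : List A) : Set A := {a | IsFactor u (a :: w)}

/-- The set of right extensions of `w`. -/
def rightExt (u : ℕ → A) (w : List A) : Set A := {b | IsFactor u (w ++ [b])}

def LeftSpecial (u : ℕ → A) (w : List A) : Prop := 2 ≤ (leftExt u w).ncard

def RightSpecial (u : ℕ → A) (w : List A) : Prop := 2 ≤ (rightExt u w).ncard

/-- The set of pairs `(a, b)` such that `a w b` is a factor of `u`. -/
def extPairs (u : ℕ → A) (w : List A) : Set (A × A) :=
  {p | IsFactor u (p.1 :: (w ++ [p.2]))}

/-- The bilateral order `B(w)`. -/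
noncomputable def bilateralOrder (u : ℕ → A) (w : List A) : ℤ :=
  ((extPairs u w).ncard : ℤ) - (leftExt u w).ncard - (rightExt u w).ncard + 1

/-- `w` is a weak bispecial factor of `u`. -/
def WeakBispecial (u : ℕ → A) (w : List A) : Prop :=
  IsFactor u w ∧ bilateralOrder u w < 0

/-- The factor complexity of `u`. -/
noncomputable def Complexity (u : ℕ → A) (n : ℕ) : ℕ :=
  {w : List A | w.length = n ∧ IsFactor u w}.ncard

/-- `u` is recurrent: every factor occurs at least twice. -/
def Recurrent (u : ℕ → A) : Prop :=
  ∀ w, IsFactor u w → ∃ j k, j < k ∧ OccursAt u w j ∧ OccursAt u w k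

/-- `u` is uniformly recurrent. -/
def UniformlyRecurrent (u : ℕ → A) : Prop :=
  ∀ n : ℕ, ∃ N : ℕ, ∀ w, IsFactor u w → w.length = N →
    ∀ v, IsFactor u v → v.length = n → v <:+: w

def EventuallyPeriodic (u : ℕ → A) : Prop :=
  ∃ p, 0 < p ∧ ∃ N, ∀ n, N ≤ n → u (n + p) = u n

/-- `w` is a maximal right special factor. -/
def MaximalRightSpecial (u : ℕ → A) (w : List A) : Prop :=
  IsFactor u w ∧ RightSpecial u w ∧
    ∀ v, IsFactor u v → RightSpecial u v → w <:+ v → v = w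

/-- The return word `v` of `w` starts with the letter `b`. -/
def StartsWithLetter (w v : List A) (b : A) : Prop := (w ++ [b]) <+: (v ++ w)

open Classical

set_option linter.unusedSectionVars false
set_option linter.unreachableTactic false
set_option linter.unusedTactic false
set_option linter.unnecessarySeqFocus false
set_option linter.unusedVariables false
set_option maxHeartbeats 1000000

/-! ### basics -/

@[simp] lemma factorAt_length (u : ℕ → A) (j n : ℕ) : (factorAt u j n).length = n := by
  simp [factorAt]

lemma factorAt_getElem (u : ℕ → A) (j n i : ℕ) (h : i < n) :
    (factorAt u j n)[i]'(by simpa using h) = u (j + i) := by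
  simp [factorAt]

lemma occursAt_iff {u : ℕ → A} {w : List A} {j : ℕ} :
    OccursAt u w j ↔ ∀ i (h : i < w.length), w[i] = u (j + i) := by
  constructor
  · intro hw i h
    exact (List.getElem_of_eq hw.symm h).trans (factorAt_getElem u j w.length i h)
  · intro h
    apply List.ext_getElem (by simp)
    intro i h1 h2
    rw [factorAt_getElem u j w.length i (by simpa using h1), h i h2]

lemma occursAt_factorAt (u : ℕ → A) (j n : ℕ) : OccursAt u (factorAt u j n) j := by
  rw [OccursAt, factorAt_length]

lemma isFactor_factorAt (u : ℕ → A) (j n : ℕ) : IsFactor u (factorAt u j n) :=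
  ⟨j, occursAt_factorAt u j n⟩

lemma occursAt_getElem {u : ℕ → A} {w : List A} {j : ℕ} (hw : OccursAt u w j)
    {i : ℕ} (h : i < w.length) : w[i] = u (j + i) :=
  occursAt_iff.1 hw i h

lemma isFactor_iff_eq_factorAt {u : ℕ → A} {w : List A} :
    IsFactor u w ↔ ∃ j, w = factorAt u j w.length := by
  unfold IsFactor OccursAt
  exact ⟨fun ⟨j, h⟩ => ⟨j, h.symm⟩, fun ⟨j, h⟩ => ⟨j, h.symm⟩⟩

lemma factorAt_add (u : ℕ → A) (j a b : ℕ) :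
    factorAt u j (a + b) = factorAt u j a ++ factorAt u (j + a) b := by
  simp [factorAt, List.range_add, List.map_map, Function.comp_def, Nat.add_assoc]

lemma factorAt_take (u : ℕ → A) (j n m : ℕ) (h : m ≤ n) :
    (factorAt u j n).take m = factorAt u j m := by
  apply List.ext_getElem (by simp [h])
  intro i h1 h2
  simp only [List.getElem_take]
  rw [factorAt_getElem u j n i (by simp at h1; omega), factorAt_getElem u j m i (by simpa using h2)]

lemma factorAt_drop (u : ℕ → A) (j n m : ℕ) (h : m ≤ n) :
    (factorAt u j n).drop m = factorAt u (j + m) (n - m) := by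
  apply List.ext_getElem (by simp)
  intro i h1 h2
  rw [List.getElem_drop]
  rw [factorAt_getElem u j n _ (by simp at h1; omega),
    factorAt_getElem u (j+m) (n-m) i (by simpa using h2)]
  ring_nf

lemma isFactor_take {u : ℕ → A} {w : List A} (h : IsFactor u w) (m : ℕ) :
    IsFactor u (w.take m) := by
  rcases h with ⟨j, hj⟩
  rcases le_or_gt m w.length with hm | hm
  · have ht : w.take m = factorAt u j m := by
      conv_lhs => rw [← hj]
      rw [OccursAt] at hj
      rw [factorAt_take u j w.length m hm]
    exact ⟨j, by rw [OccursAt, ht, factorAt_length]⟩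
  · rw [List.take_of_length_le hm.le]
    exact ⟨j, hj⟩

lemma isFactor_drop {u : ℕ → A} {w : List A} (h : IsFactor u w) (m : ℕ) :
    IsFactor u (w.drop m) := by
  rcases isFactor_iff_eq_factorAt.1 h with ⟨j, hj⟩
  rcases le_or_gt m w.length with hm | hm
  · rw [hj, factorAt_drop u _ _ _ (by simpa using hm)]
    exact isFactor_factorAt _ _ _
  · rw [List.drop_of_length_le hm.le]
    exact ⟨0, rfl⟩

lemma isFactor_nil (u : ℕ → A) : IsFactor u ([] : List A) := ⟨0, rfl⟩

lemma isFactor_of_infix {u : ℕ → A} {w v : List A} (h : IsFactor u w) (hv : v <:+: w) :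
    IsFactor u v := by
  rcases hv with ⟨s, t, rfl⟩
  rw [List.append_assoc] at h
  have h1 := isFactor_drop h s.length
  rw [List.drop_left' rfl] at h1
  have h2 := isFactor_take h1 v.length
  rwa [List.take_left' rfl] at h2

lemma occursAt_append {u : ℕ → A} {w v : List A} {j : ℕ}
    (hw : OccursAt u w j) (hv : OccursAt u v (j + w.length)) :
    OccursAt u (w ++ v) j := by
  unfold OccursAt at *
  rw [List.length_append, factorAt_add, hw, hv]

lemma occursAt_append_right {u : ℕ → A} {w v : List A} {j : ℕ}
    (h : OccursAt u (w ++ v) j) : OccursAt u v (j + w.length) := by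
  rw [occursAt_iff] at h ⊢
  intro i hi
  have := h (w.length + i) (by simp; omega)
  rw [List.getElem_append_right (by omega)] at this
  simpa [Nat.add_assoc] using this

lemma occursAt_append_left {u : ℕ → A} {w v : List A} {j : ℕ}
    (h : OccursAt u (w ++ v) j) : OccursAt u w j := by
  rw [occursAt_iff] at h ⊢
  intro i hi
  have := h i (by simp; omega)
  rwa [List.getElem_append_left hi] at this

lemma rightExt_mem {u : ℕ → A} {w : List A} {j : ℕ} (hw : OccursAt u w j) :
    u (j + w.length) ∈ rightExt u w := by
  refine ⟨j, occursAt_append hw ?_⟩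
  rw [occursAt_iff]
  intro i hi
  have : i = 0 := by simpa using hi
  subst this
  simp

lemma rightExt_nonempty {u : ℕ → A} {w : List A} (h : IsFactor u w) :
    (rightExt u w).Nonempty := by
  rcases h with ⟨j, hj⟩
  exact ⟨_, rightExt_mem hj⟩

open Classical

/-! ### counting -/
section Counting
variable [Fintype A]
set_option linter.unusedSectionVars false
set_option linter.unusedVariables false

omit [Fintype A] in
lemma occursAt_singleton (u : ℕ → A) (t : ℕ) : OccursAt u [u t] t := by
  rw [occursAt_iff]
  intro i hi
  have : i = 0 := by simpa using hi
  subst this; simp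

omit [Fintype A] in
lemma leftExt_mem {u : ℕ → A} {w : List A} {k : ℕ} (hw : OccursAt u w (k + 1)) :
    u k ∈ leftExt u w := by
  refine ⟨k, ?_⟩
  have := occursAt_append (w := [u k]) (v := w) (occursAt_singleton u k) (by simpa using hw)
  simpa using this

lemma two_of_three (hcard : Fintype.card A = 2) {a b c : A} (h1 : a ≠ b) (h2 : a ≠ c) :
    b = c := by
  by_contra h3
  have hc : ({a, b, c} : Finset A).card = 3 := by
    rw [Finset.card_insert_of_notMem (by simp [h1, h2]),
      Finset.card_insert_of_notMem (by simp [h3]), Finset.card_singleton]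
  have := Finset.card_le_univ ({a, b, c} : Finset A)
  rw [hc] at this
  omega

lemma factors_finite (u : ℕ → A) (l : ℕ) : {w : List A | w.length = l ∧ IsFactor u w}.Finite :=
  (List.finite_length_eq A l).subset fun _ hw => hw.1

noncomputable def factorsFinset (u : ℕ → A) (l : ℕ) : Finset (List A) :=
  (factors_finite u l).toFinset

lemma mem_factorsFinset {u : ℕ → A} {l : ℕ} {w : List A} :
    w ∈ factorsFinset u l ↔ w.length = l ∧ IsFactor u w := by
  simp [factorsFinset]

lemma complexity_eq_card (u : ℕ → A) (l : ℕ) :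
    Complexity u l = (factorsFinset u l).card :=
  Set.ncard_eq_toFinset_card _ (factors_finite u l)

omit [Fintype A] in
lemma complexity_zero (u : ℕ → A) : Complexity u 0 = 1 := by
  have : {w : List A | w.length = 0 ∧ IsFactor u w} = {([] : List A)} := by
    ext w
    simp only [Set.mem_setOf_eq, Set.mem_singleton_iff, List.length_eq_zero_iff]
    exact ⟨fun h => h.1, fun h => ⟨h, h ▸ isFactor_nil u⟩⟩
  rw [Complexity, this, Set.ncard_singleton]

noncomputable def rext (u : ℕ → A) (w : List A) : Finset A :=
  (Set.toFinite (rightExt u w)).toFinset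

noncomputable def lext (u : ℕ → A) (w : List A) : Finset A :=
  (Set.toFinite (leftExt u w)).toFinset

lemma mem_rext {u : ℕ → A} {w : List A} {b : A} : b ∈ rext u w ↔ IsFactor u (w ++ [b]) := by
  simp [rext, rightExt]

lemma mem_lext {u : ℕ → A} {w : List A} {a : A} : a ∈ lext u w ↔ IsFactor u (a :: w) := by
  simp [lext, leftExt]

lemma rightSpecial_iff_card {u : ℕ → A} {w : List A} :
    RightSpecial u w ↔ 2 ≤ (rext u w).card := by
  rw [RightSpecial, Set.ncard_eq_toFinset_card _ (Set.toFinite (rightExt u w))]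
  rfl

lemma leftSpecial_iff_card {u : ℕ → A} {w : List A} :
    LeftSpecial u w ↔ 2 ≤ (lext u w).card := by
  rw [LeftSpecial, Set.ncard_eq_toFinset_card _ (Set.toFinite (leftExt u w))]
  rfl

lemma rext_card_le (hcard : Fintype.card A = 2) (u : ℕ → A) (w : List A) :
    (rext u w).card ≤ 2 := hcard ▸ Finset.card_le_univ _

lemma lext_card_le (hcard : Fintype.card A = 2) (u : ℕ → A) (w : List A) :
    (lext u w).card ≤ 2 := hcard ▸ Finset.card_le_univ _

lemma rext_card_pos {u : ℕ → A} {w : List A} (h : IsFactor u w) :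
    1 ≤ (rext u w).card := by
  rcases h with ⟨j, hj⟩
  have := rightExt_mem hj
  exact Finset.card_pos.2 ⟨_, by rw [mem_rext]; exact this⟩

lemma lext_card_pos {u : ℕ → A} {w : List A} (hrec : Recurrent u) (h : IsFactor u w) :
    1 ≤ (lext u w).card := by
  rcases hrec w h with ⟨j, k, hjk, _, hk⟩
  obtain ⟨k', rfl⟩ : ∃ k', k = k' + 1 := ⟨k - 1, by omega⟩
  exact Finset.card_pos.2 ⟨_, by rw [mem_lext]; exact leftExt_mem hk⟩

lemma factorsFinset_succ_right (u : ℕ → A) (l : ℕ) :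
    factorsFinset u (l + 1) =
      (factorsFinset u l).biUnion (fun w => (rext u w).image (fun b => w ++ [b])) := by
  ext v
  simp only [mem_factorsFinset, Finset.mem_biUnion, Finset.mem_image, mem_rext]
  constructor
  · rintro ⟨hlen, hv⟩
    have hne : v ≠ [] := by intro h; rw [h] at hlen; simp at hlen
    refine ⟨v.dropLast, ⟨?_, ?_⟩, v.getLast hne, ?_, List.dropLast_append_getLast hne⟩
    · rw [List.length_dropLast, hlen]; rfl
    · exact isFactor_of_infix hv ⟨[], [v.getLast hne], by simp [List.dropLast_append_getLast hne]⟩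
    · rw [List.dropLast_append_getLast hne]; exact hv
  · rintro ⟨w, ⟨hlen, _⟩, b, hb, rfl⟩
    exact ⟨by simp [hlen], hb⟩

lemma complexity_succ_right (u : ℕ → A) (l : ℕ) :
    Complexity u (l + 1) = ∑ w ∈ factorsFinset u l, (rext u w).card := by
  rw [complexity_eq_card, factorsFinset_succ_right]
  rw [Finset.card_biUnion]
  · refine Finset.sum_congr rfl fun w _ => ?_
    exact Finset.card_image_of_injective _ (fun b b' h => by simpa using h)
  · intro w hw w' hw' hne
    simp only [Finset.disjoint_left, Finset.mem_image]
    rintro v ⟨b, hb, rfl⟩ ⟨b', hb', he⟩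
    exact hne ((List.append_inj' he rfl).1.symm)

lemma factorsFinset_succ_left (u : ℕ → A) (l : ℕ) :
    factorsFinset u (l + 1) =
      (factorsFinset u l).biUnion (fun w => (lext u w).image (fun a => a :: w)) := by
  ext v
  simp only [mem_factorsFinset, Finset.mem_biUnion, Finset.mem_image, mem_lext]
  constructor
  · rintro ⟨hlen, hv⟩
    obtain ⟨a, t, rfl⟩ : ∃ a t, v = a :: t := by
      cases v with
      | nil => simp at hlen
      | cons a t => exact ⟨a, t, rfl⟩
    refine ⟨t, ⟨by simpa using hlen, ?_⟩, a, hv, rfl⟩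
    have := isFactor_drop hv 1
    simpa using this
  · rintro ⟨w, ⟨hlen, _⟩, a, ha, rfl⟩
    exact ⟨by simp [hlen], ha⟩

lemma complexity_succ_left (u : ℕ → A) (l : ℕ) :
    Complexity u (l + 1) = ∑ w ∈ factorsFinset u l, (lext u w).card := by
  rw [complexity_eq_card, factorsFinset_succ_left]
  rw [Finset.card_biUnion]
  · refine Finset.sum_congr rfl fun w _ => ?_
    exact Finset.card_image_of_injective _ (fun a a' h => by simpa using h)
  · intro w hw w' hw' hne
    simp only [Finset.disjoint_left, Finset.mem_image]
    rintro v ⟨a, ha, rfl⟩ ⟨a', ha', he⟩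
    have h2 : a' = a ∧ w' = w := by simpa using he
    exact hne h2.2.symm

omit [Fintype A] in
/-- helper : sum with two big elements -/
lemma sum_ge_of_two {s : Finset (List A)} {f : List A → ℕ} (h1 : ∀ w ∈ s, 1 ≤ f w)
    {a b : List A} (ha : a ∈ s) (hb : b ∈ s) (hab : a ≠ b)
    (h2a : 2 ≤ f a) (h2b : 2 ≤ f b) : s.card + 2 ≤ ∑ w ∈ s, f w := by
  have hbe : b ∈ s.erase a := Finset.mem_erase.2 ⟨Ne.symm hab, hb⟩
  rw [← Finset.add_sum_erase s f ha, ← Finset.add_sum_erase _ f hbe]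
  have h3 : s.card ≤ ((s.erase a).erase b).card + 2 := by
    rw [Finset.card_erase_of_mem hbe, Finset.card_erase_of_mem ha]
    have h5 := Finset.card_pos.2 ⟨a, ha⟩
    have h6 := Finset.card_pos.2 ⟨b, hbe⟩
    omega
  have h4 : ((s.erase a).erase b).card ≤ ∑ w ∈ (s.erase a).erase b, f w := by
    calc ((s.erase a).erase b).card = ∑ _w ∈ (s.erase a).erase b, 1 := by simp
      _ ≤ ∑ w ∈ (s.erase a).erase b, f w :=
        Finset.sum_le_sum (fun w hw => h1 w (Finset.mem_of_mem_erase (Finset.mem_of_mem_erase hw)))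
  omega

/-- at most one left special factor of each length, for complexity n+1 words -/
lemma atMostOne_leftSpecial (hcard : Fintype.card A = 2) {u : ℕ → A}
    (hC : ∀ n, Complexity u n = n + 1) (hrec : Recurrent u) {l : ℕ} {w w' : List A}
    (hw : w.length = l) (hwf : IsFactor u w) (hws : LeftSpecial u w)
    (hw' : w'.length = l) (hwf' : IsFactor u w') (hws' : LeftSpecial u w') : w = w' := by
  by_contra hne
  have hsum := complexity_succ_left u l
  have hbig := sum_ge_of_two (s := factorsFinset u l) (f := fun w => (lext u w).card)
    (fun v hv => lext_card_pos hrec (mem_factorsFinset.1 hv).2)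
    (mem_factorsFinset.2 ⟨hw, hwf⟩) (mem_factorsFinset.2 ⟨hw', hwf'⟩) hne
    (leftSpecial_iff_card.1 hws) (leftSpecial_iff_card.1 hws')
  rw [← complexity_eq_card, ← hsum, hC l, hC (l+1)] at hbig
  omega

/-- complexity step: C(l+1) = C(l) + #right special factors of length l -/
lemma complexity_succ_rs (hcard : Fintype.card A = 2) (u : ℕ → A) (l : ℕ) :
    Complexity u (l + 1) =
      Complexity u l + ((factorsFinset u l).filter (fun w => RightSpecial u w)).card := by
  rw [complexity_succ_right, complexity_eq_card]
  have hcong : ∀ w ∈ factorsFinset u l, (rext u w).card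
      = 1 + (if RightSpecial u w then 1 else 0) := by
    intro w hw
    have h1 := rext_card_pos (mem_factorsFinset.1 hw).2
    have h2 := rext_card_le hcard u w
    by_cases h : RightSpecial u w
    · have h4 := rightSpecial_iff_card.1 h
      simp only [if_pos h]
      omega
    · have h3 : ¬ (2 ≤ (rext u w).card) := fun hc => h (rightSpecial_iff_card.2 hc)
      simp only [if_neg h]
      omega
  rw [Finset.sum_congr rfl hcong, Finset.sum_add_distrib]
  congr 1
  · simp
  · rw [Finset.card_filter]

/-- Morse–Hedlund: if no right special factor of length n, then eventually periodic. -/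
lemma mh_of_no_rs {u : ℕ → A} {n : ℕ}
    (hn : ∀ w, IsFactor u w → w.length = n → ¬ RightSpecial u w) :
    EventuallyPeriodic u := by
  obtain ⟨j, k, hne, hjk⟩ : ∃ j k : ℕ, j ≠ k ∧ (fun (j : ℕ) (i : Fin n) => u (j + i)) j
      = (fun (j : ℕ) (i : Fin n) => u (j + i)) k := by
    obtain ⟨j, k, hne, h⟩ := Finite.exists_ne_map_eq_of_infinite
      (fun (j : ℕ) (i : Fin n) => u (j + i))
    exact ⟨j, k, hne, h⟩
  wlog hlt : j < k generalizing j k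
  · exact this k j hne.symm hjk.symm (by omega)
  have hbase : ∀ i, i < n → u (j + i) = u (k + i) := by
    intro i hi
    exact congrFun hjk ⟨i, hi⟩
  have key : ∀ m, u (j + m) = u (k + m) := by
    intro m
    induction m using Nat.strong_induction_on with
    | _ m ih =>
      rcases lt_or_ge m n with hm | hm
      · exact hbase m hm
      · set W := factorAt u (j + (m - n)) n with hW
        have hWocc : OccursAt u W (j + (m - n)) := by
          have := occursAt_factorAt u (j + (m-n)) n
          rwa [← hW] at this
        have hWlen : W.length = n := by simp [hW]
        have hWocc' : OccursAt u W (k + (m - n)) := by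
          rw [occursAt_iff]
          intro i hi
          have h1 := occursAt_getElem hWocc hi
          have hii : i < n := hWlen ▸ hi
          have h2 : u (j + (m - n) + i) = u (k + (m - n) + i) := by
            have := ih (m - n + i) (by omega)
            calc u (j + (m - n) + i) = u (j + (m - n + i)) := by ring_nf
              _ = u (k + (m - n + i)) := this
              _ = u (k + (m - n) + i) := by ring_nf
          exact h1.trans h2
        have hns := hn W ⟨_, hWocc⟩ hWlen
        have m1 : u (j + (m - n) + n) ∈ rightExt u W := by
          have := rightExt_mem hWocc; rwa [hWlen] at this
        have m2 : u (k + (m - n) + n) ∈ rightExt u W := by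
          have := rightExt_mem hWocc'; rwa [hWlen] at this
        have heq : u (j + (m - n) + n) = u (k + (m - n) + n) := by
          by_contra hne2
          apply hns
          rw [RightSpecial]
          have hsub : ({u (j + (m - n) + n), u (k + (m - n) + n)} : Set A) ⊆ rightExt u W := by
            intro x hx; rcases hx with rfl | rfl
            · exact m1
            · exact m2
          calc 2 = ({u (j + (m - n) + n), u (k + (m - n) + n)} : Set A).ncard :=
              (Set.ncard_pair hne2).symm
            _ ≤ (rightExt u W).ncard := Set.ncard_le_ncard hsub (Set.toFinite _)
        have e1 : j + (m - n) + n = j + m := by omega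
        have e2 : k + (m - n) + n = k + m := by omega
        rwa [e1, e2] at heq
  refine ⟨k - j, by omega, j, fun x hx => ?_⟩
  have hkey := key (x - j)
  have e1 : j + (x - j) = x := by omega
  have e2 : k + (x - j) = x + (k - j) := by omega
  rw [e1, e2] at hkey
  exact hkey.symm

end Counting

open Classical

set_option linter.unusedSectionVars false

/-! ### enumeration of an unbounded predicate -/

def UnbddP (P : ℕ → Prop) : Prop := ∀ t, ∃ s, t < s ∧ P s

noncomputable def enum {P : ℕ → Prop} (hP : UnbddP P) : ℕ → ℕ
  | 0 => Nat.find (⟨(hP 0).choose, (hP 0).choose_spec.2⟩ : ∃ n, P n)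
  | e + 1 => Nat.find (hP (enum hP e))

lemma enum_mem {P : ℕ → Prop} (hP : UnbddP P) (e : ℕ) : P (enum hP e) := by
  cases e with
  | zero => exact Nat.find_spec (⟨(hP 0).choose, (hP 0).choose_spec.2⟩ : ∃ n, P n)
  | succ e => exact (Nat.find_spec (hP (enum hP e))).2

lemma enum_lt_succ {P : ℕ → Prop} (hP : UnbddP P) (e : ℕ) :
    enum hP e < enum hP (e + 1) :=
  (Nat.find_spec (hP (enum hP e))).1

lemma enum_strictMono {P : ℕ → Prop} (hP : UnbddP P) : StrictMono (enum hP) :=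
  strictMono_nat_of_lt_succ (enum_lt_succ hP)

lemma enum_zero_le {P : ℕ → Prop} (hP : UnbddP P) {t : ℕ} (ht : P t) : enum hP 0 ≤ t :=
  Nat.find_min' _ ht

lemma enum_not_between {P : ℕ → Prop} (hP : UnbddP P) {e l : ℕ}
    (h1 : enum hP e < l) (h2 : l < enum hP (e + 1)) : ¬ P l := by
  intro hl
  exact Nat.find_min (hP (enum hP e)) h2 ⟨h1, hl⟩

lemma enum_le_self {P : ℕ → Prop} (hP : UnbddP P) (e : ℕ) : e ≤ enum hP e :=
  (enum_strictMono hP).le_apply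

lemma enum_locate {P : ℕ → Prop} (hP : UnbddP P) {x : ℕ} (hx : enum hP 0 ≤ x) :
    ∃ e, enum hP e ≤ x ∧ x < enum hP (e + 1) := by
  set Q := fun e => enum hP e ≤ x with hQ
  have hQ0 : Q 0 := hx
  set e := Nat.findGreatest Q x with he
  have he1 : Q e := Nat.findGreatest_spec (Nat.zero_le x) hQ0
  refine ⟨e, he1, ?_⟩
  by_contra hcon
  push_neg at hcon
  have h2 : e + 1 ≤ Nat.findGreatest Q x := by
    apply Nat.le_findGreatest
    · exact le_trans (le_trans (enum_le_self hP (e+1)) hcon) (le_refl x)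
    · exact hcon
  omega

lemma enum_surj {P : ℕ → Prop} (hP : UnbddP P) {t : ℕ} (ht : P t) :
    ∃ e, enum hP e = t := by
  obtain ⟨e, h1, h2⟩ := enum_locate hP (enum_zero_le hP ht)
  rcases eq_or_lt_of_le h1 with h | h
  · exact ⟨e, h⟩
  · exact absurd ht (enum_not_between hP h h2)

/-! ### occurrences -/

lemma occursAt_of_agree {u : ℕ → A} {w : List A} {j j' : ℕ} (h : OccursAt u w j)
    (hagree : ∀ i, i < w.length → u (j' + i) = u (j + i)) : OccursAt u w j' := by
  rw [occursAt_iff] at h ⊢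
  intro i hi
  rw [h i hi, ← hagree i hi]

/-- every factor of a recurrent word occurs at unboundedly many positions -/
lemma occ_unbdd {u : ℕ → A} (hrec : Recurrent u) {w : List A} (hw : IsFactor u w) :
    UnbddP (fun t => OccursAt u w t) := by
  have step : ∀ s, OccursAt u w s → ∃ s', s < s' ∧ OccursAt u w s' := by
    intro s hs
    set L := s + w.length with hL
    set W := factorAt u 0 L with hW
    obtain ⟨p, q, hpq, hp, hq⟩ := hrec W (isFactor_factorAt u 0 L)
    have hq1 : 1 ≤ q := by omega
    have hWlen : W.length = L := by simp [hW]
    have h0 : OccursAt u W 0 := by rw [hW]; exact occursAt_factorAt u 0 L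
    have hagree : ∀ x, x < L → u (q + x) = u x := by
      intro x hx
      have h1 := occursAt_getElem hq (i := x) (by rw [hWlen]; exact hx)
      have h2 := occursAt_getElem h0 (i := x) (by rw [hWlen]; exact hx)
      rw [Nat.zero_add] at h2
      exact h1.symm.trans h2
    refine ⟨q + s, by omega, ?_⟩
    apply occursAt_of_agree hs
    intro i hi
    have := hagree (s + i) (by omega)
    rw [show q + s + i = q + (s + i) by ring]
    exact this
  rcases hw with ⟨j0, hj0⟩
  intro t
  induction t with
  | zero =>
    rcases Nat.eq_zero_or_pos j0 with h | h
    · obtain ⟨s', hs1, hs2⟩ := step j0 hj0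
      exact ⟨s', by omega, hs2⟩
    · exact ⟨j0, h, hj0⟩
  | succ t ih =>
    obtain ⟨s, hs1, hs2⟩ := ih
    rcases lt_or_ge (t+1) s with h | h
    · exact ⟨s, h, hs2⟩
    · have hst : s = t + 1 := by omega
      obtain ⟨s', hs1', hs2'⟩ := step s hs2
      exact ⟨s', by omega, hs2'⟩

section ReturnStructure

variable {u : ℕ → A} {w : List A} (hu : UnbddP (fun t => OccursAt u w t))

/-- the e-th occurrence -/
noncomputable def occ (hu : UnbddP (fun t => OccursAt u w t)) (e : ℕ) : ℕ := enum hu e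

/-- the e-th return word -/
noncomputable def rword (hu : UnbddP (fun t => OccursAt u w t)) (e : ℕ) : List A :=
  factorAt u (occ hu e) (occ hu (e + 1) - occ hu e)

lemma occ_occurs (e : ℕ) : OccursAt u w (occ hu e) := enum_mem hu e

lemma occ_lt_succ (e : ℕ) : occ hu e < occ hu (e + 1) := enum_lt_succ hu e

lemma occ_mono : StrictMono (occ hu) := enum_strictMono hu

lemma rword_length (e : ℕ) : (rword hu e).length = occ hu (e + 1) - occ hu e := by
  simp [rword]

lemma rword_length_pos (e : ℕ) : 0 < (rword hu e).length := by
  rw [rword_length]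
  have := occ_lt_succ hu e
  omega

lemma isReturnWord_iff {v : List A} :
    IsReturnWord u w v ↔ ∃ e, v = rword hu e := by
  constructor
  · rintro ⟨j, k, hjk, hj, hk, hbet, hv⟩
    obtain ⟨e, he⟩ := enum_surj hu hj
    have hocc : occ hu e = enum hu e := rfl
    have hocc1 : occ hu (e + 1) = enum hu (e + 1) := rfl
    have hkk : k = occ hu (e + 1) := by
      rcases lt_trichotomy k (occ hu (e+1)) with h | h | h
      · rw [hocc1] at h
        exact absurd hk (enum_not_between hu (by omega) h)
      · exact h
      · have hlt := occ_lt_succ hu e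
        have h2 := hbet (occ hu (e+1)) (by rw [hocc] at hlt; omega) h
        exact absurd (occ_occurs hu (e+1)) h2
    exact ⟨e, by rw [hv, hkk, ← he]; rfl⟩
  · rintro ⟨e, rfl⟩
    refine ⟨occ hu e, occ hu (e+1), occ_lt_succ hu e, occ_occurs hu e, occ_occurs hu (e+1),
      ?_, rfl⟩
    intro l h1 h2 hl
    exact enum_not_between hu h1 h2 hl

lemma returnWords_eq_range : returnWords u w = Set.range (rword hu) := by
  ext v
  rw [returnWords, Set.mem_setOf_eq, isReturnWord_iff hu]
  simp [eq_comm]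

lemma occ_factorAt_concat (e m : ℕ) :
    factorAt u (occ hu e) (occ hu (e + m) - occ hu e)
      = ((List.range m).map (fun t => rword hu (e + t))).flatten := by
  induction m with
  | zero => simp [factorAt]
  | succ m ih =>
    have hle : occ hu e ≤ occ hu (e + m) := (occ_mono hu).monotone (by omega)
    have hle2 : occ hu (e + m) ≤ occ hu (e + m + 1) := (occ_lt_succ hu (e+m)).le
    have hsplit : occ hu (e + (m+1)) - occ hu e
        = (occ hu (e + m) - occ hu e) + (occ hu (e + m + 1) - occ hu (e + m)) := by
      have : e + (m + 1) = e + m + 1 := by ring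
      rw [this]
      omega
    rw [hsplit, factorAt_add, ih]
    have : occ hu e + (occ hu (e + m) - occ hu e) = occ hu (e + m) := by omega
    rw [this]
    rw [List.range_succ, List.map_append, List.flatten_append]
    simp [rword]

end ReturnStructure

open Classical
set_option linter.unusedSectionVars false

lemma recurrent_of_R2 {u : ℕ → A} (hR : PropertyR u 2) : Recurrent u := by
  intro w hw
  obtain ⟨hfin, hcard⟩ := hR w hw
  have hne : (returnWords u w).Nonempty := by
    apply Set.nonempty_of_ncard_ne_zero
    omega
  obtain ⟨v, j, k, hjk, hj, hk, -, -⟩ := hne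
  exact ⟨j, k, hjk, hj, hk⟩

lemma purely_periodic_of_EP {u : ℕ → A} (hrec : Recurrent u) (hEP : EventuallyPeriodic u) :
    ∃ p, 0 < p ∧ ∀ x, u (x + p) = u x := by
  obtain ⟨p, hp, N, hN⟩ := hEP
  set M := 2 * N + p with hM
  set W := factorAt u 0 M with hW
  obtain ⟨j, c, hjc, hjW, hcW⟩ := hrec W (isFactor_factorAt u 0 M)
  have hc1 : 1 ≤ c := by omega
  have hWlen : W.length = M := by simp [hW]
  have h0 : OccursAt u W 0 := by rw [hW]; exact occursAt_factorAt u 0 M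
  have hbase : ∀ y, y < M → u (y + c) = u y := by
    intro y hy
    have h1 := occursAt_getElem hcW (i := y) (by rw [hWlen]; exact hy)
    have h2 := occursAt_getElem h0 (i := y) (by rw [hWlen]; exact hy)
    rw [Nat.zero_add] at h2
    rw [Nat.add_comm y c]
    exact h1.symm.trans h2
  have hcomp : ∀ s x, x + s * c < M + c → u (x + s * c) = u x := by
    intro s
    induction s with
    | zero => intro x _; simp
    | succ s ih =>
      intro x hx
      have e1 : x + (s+1) * c = (x + s * c) + c := by ring
      rw [e1, hbase (x + s * c) (by nlinarith), ih x (by nlinarith)]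
  set t := N / c + 1 with ht
  set K := t * c with hK
  have hd := Nat.div_add_mod N c
  have hm2 : N % c < c := Nat.mod_lt _ (by omega)
  have hKeq : K = c * (N / c) + c := by rw [hK, ht]; ring
  have hKN : N ≤ K := by omega
  have hKt : K ≤ N + c := by omega
  have hKper : ∀ x, x < N + p → u (x + K) = u x := by
    intro x hx
    apply hcomp
    omega
  refine ⟨p, hp, fun x => ?_⟩
  rcases le_or_gt N x with h | h
  · exact hN x h
  · calc u (x + p) = u (x + p + K) := (hKper (x + p) (by omega)).symm
      _ = u (x + K + p) := by ring_nf
      _ = u (x + K) := hN (x + K) (by omega)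
      _ = u x := hKper x (by omega)

lemma not_EP_of_R2 {u : ℕ → A} (hR : PropertyR u 2) : ¬ EventuallyPeriodic u := by
  intro hEP
  have hrec := recurrent_of_R2 hR
  obtain ⟨p0, hp0, hper0⟩ := purely_periodic_of_EP hrec hEP
  have hex : ∃ q, 0 < q ∧ ∀ x, u (x + q) = u x := ⟨p0, hp0, hper0⟩
  set p := Nat.find hex with hpdef
  obtain ⟨hppos, hper⟩ := Nat.find_spec hex
  have hmin : ∀ q, q < p → ¬ (0 < q ∧ ∀ x, u (x + q) = u x) := fun q hq => Nat.find_min hex hq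
  -- multiples of p are periods
  have hmul : ∀ m x, u (x + m * p) = u x := by
    intro m
    induction m with
    | zero => simp
    | succ m ih =>
      intro x
      calc u (x + (m+1) * p) = u ((x + m * p) + p) := by ring_nf
        _ = u (x + m * p) := hper _
        _ = u x := ih x
  have hmodeq : ∀ a b, a % p = b % p → u a = u b := by
    intro a b hab
    have e1 : a = a % p + (a / p) * p := by
      have := Nat.div_add_mod a p
      have h2 : p * (a / p) = (a / p) * p := Nat.mul_comm _ _
      omega
    have e2 : b = b % p + (b / p) * p := by
      have := Nat.div_add_mod b p
      have h2 : p * (b / p) = (b / p) * p := Nat.mul_comm _ _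
      omega
    rw [e1, e2, hmul, hmul, hab]
  set w := factorAt u 0 p with hwdef
  have hwlen : w.length = p := by simp [hwdef]
  have hwocc0 : OccursAt u w 0 := by rw [hwdef]; exact occursAt_factorAt u 0 p
  have hocc_mul : ∀ q, OccursAt u w (q * p) := by
    intro q
    apply occursAt_of_agree hwocc0
    intro i hi
    rw [Nat.zero_add]
    rw [Nat.add_comm (q * p) i]
    exact hmul q i
  have hocc_only : ∀ s, OccursAt u w s → s % p = 0 := by
    intro s hs
    by_contra hr
    have hrpos : 0 < s % p := Nat.pos_of_ne_zero hr
    have hrlt : s % p < p := Nat.mod_lt _ hppos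
    -- s is a global period
    have hs_agree : ∀ i, i < p → u (s + i) = u i := by
      intro i hi
      have h1 := occursAt_getElem hs (i := i) (by rw [hwlen]; exact hi)
      have h2 := occursAt_getElem hwocc0 (i := i) (by rw [hwlen]; exact hi)
      rw [Nat.zero_add] at h2
      exact h1.symm.trans h2
    have hs_per : ∀ x, u (x + s) = u x := by
      intro x
      have e1 : (x + s) % p = (x % p + s) % p :=
        (Nat.ModEq.add_right s (Nat.mod_modEq x p)).symm
      calc u (x + s) = u (x % p + s) := hmodeq _ _ e1
        _ = u (x % p) := by rw [Nat.add_comm]; exact hs_agree _ (Nat.mod_lt _ hppos)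
        _ = u x := hmodeq _ _ (Nat.mod_modEq x p)
    exact hmin (s % p) hrlt ⟨hrpos, by
      intro x
      calc u (x + s % p) = u (x + s % p + (s / p) * p) := (hmul _ _).symm
        _ = u (x + s) := by
            have : x + s % p + (s / p) * p = x + s := by
              have := Nat.div_add_mod s p
              have h2 : p * (s / p) = (s / p) * p := Nat.mul_comm _ _
              omega
            rw [this]
        _ = u x := hs_per x⟩
  have hret : returnWords u w = {w} := by
    ext v
    simp only [Set.mem_singleton_iff]
    constructor
    · rintro ⟨j, k, hjk, hj, hk, hbet, rfl⟩
      have qj := hocc_only j hj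
      have qk := hocc_only k hk
      obtain ⟨a, rfl⟩ : ∃ a, j = a * p := ⟨j / p, by
        have := Nat.div_add_mod j p
        have h2 : p * (j / p) = (j / p) * p := Nat.mul_comm _ _
        omega⟩
      obtain ⟨b, rfl⟩ : ∃ b, k = b * p := ⟨k / p, by
        have := Nat.div_add_mod k p
        have h2 : p * (k / p) = (k / p) * p := Nat.mul_comm _ _
        omega⟩
      have hab : a < b := by
        by_contra hab
        push_neg at hab
        have : b * p ≤ a * p := Nat.mul_le_mul_right p hab
        omega
      have hb : b = a + 1 := by
        by_contra hb
        have hb2 : a + 1 < b := by omega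
        refine hbet ((a+1) * p) ?_ ?_ (hocc_mul (a+1))
        · have : a * p < (a+1) * p := by
            have : a * p + p = (a+1) * p := by ring
            omega
          exact this
        · have : (a+1) * p < b * p := (Nat.mul_lt_mul_right hppos).2 hb2
          exact this
      subst hb
      have hlen : (a+1) * p - a * p = p := by
        have : a * p + p = (a+1) * p := by ring
        omega
      rw [hlen, hwdef]
      apply List.ext_getElem (by simp)
      intro i h1 h2
      rw [factorAt_getElem u (a*p) p i (by simpa using h1),
        factorAt_getElem u 0 p i (by simpa using h2), Nat.zero_add]
      apply hmodeq
      rw [Nat.add_mod, qj, Nat.zero_add, Nat.mod_mod_of_dvd i (dvd_refl p)]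
    · rintro rfl
      refine ⟨0, p, hppos, hwocc0, by simpa using hocc_mul 1, ?_, by
        rw [Nat.sub_zero, hwdef]⟩
      intro l h1 h2 hl
      have := hocc_only l hl
      have : p ∣ l := Nat.dvd_of_mod_eq_zero this
      rcases this with ⟨c, rfl⟩
      rcases Nat.eq_zero_or_pos c with rfl | hc
      · omega
      · have : p ≤ p * c := Nat.le_mul_of_pos_right p hc
        omega
  have hfin := (hR w ⟨0, hwocc0⟩).2
  rw [hret, Set.ncard_singleton] at hfin
  omega

open Classical
set_option linter.unusedSectionVars false
set_option maxHeartbeats 1000000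

lemma occursAt_snoc {u : ℕ → A} {w : List A} {c : A} {t : ℕ} :
    OccursAt u (w ++ [c]) t ↔ OccursAt u w t ∧ u (t + w.length) = c := by
  constructor
  · intro h
    refine ⟨occursAt_append_left h, ?_⟩
    have h2 := occursAt_append_right h
    have := occursAt_getElem h2 (i := 0) (by simp)
    simpa using this.symm
  · rintro ⟨h1, h2⟩
    apply occursAt_append h1
    rw [← h2]
    exact occursAt_singleton u (t + w.length)

lemma occursAt_cons {u : ℕ → A} {w : List A} {c : A} {t : ℕ} :
    OccursAt u (c :: w) t ↔ u t = c ∧ OccursAt u w (t + 1) := by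
  have he : c :: w = [c] ++ w := rfl
  rw [he]
  constructor
  · intro h
    have h1 := occursAt_append_left h
    have h2 := occursAt_append_right h
    refine ⟨?_, by simpa using h2⟩
    have := occursAt_getElem h1 (i := 0) (by simp)
    simpa using this.symm
  · rintro ⟨h1, h2⟩
    refine occursAt_append ?_ (by simpa using h2)
    rw [← h1]
    exact occursAt_singleton u t

/-- word made of one `vX` followed by `m` copies of `vY` -/
def Wblock (vX vY : List A) (m : ℕ) : List A := vX ++ (List.replicate m vY).flatten

lemma Wblock_length (vX vY : List A) (m : ℕ) :
    (Wblock vX vY m).length = vX.length + m * vY.length := by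
  simp [Wblock]

lemma Wblock_injective {vX vY : List A} (h : vY ≠ []) :
    Function.Injective (Wblock vX vY) := by
  intro m m' hmm
  have hl := congrArg List.length hmm
  rw [Wblock_length, Wblock_length] at hl
  have hvy : 0 < vY.length := List.length_pos_iff.2 h
  have h2 : m * vY.length = m' * vY.length := by omega
  exact Nat.eq_of_mul_eq_mul_right hvy h2

/-- The gap structure lemma: if `s` has exactly two return words `vX, vY`, where `vX`
is exactly the one followed by letter `x`, and `vX` occurs adjacent to itself somewhere,
then all maximal runs of `vY` in the derived sequence have the same length `m ≥ 1`. -/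
lemma gap_struct {u : ℕ → A} (hR : PropertyR u 2) {s : List A}
    (hu : UnbddP (fun t => OccursAt u s t)) {vX vY : List A} {x : A}
    (hne : vX ≠ vY) (hvY : vY ≠ [])
    (hcover : ∀ e, rword hu e = vX ∨ rword hu e = vY)
    (hXafter : ∀ e, rword hu e = vX → u (occ hu e + s.length) = x)
    (hYafter : ∀ e, rword hu e = vY → u (occ hu e + s.length) ≠ x)
    (hXunb : UnbddP (fun e => rword hu e = vX))
    (hXX : ∃ i, 1 ≤ i ∧ rword hu (i-1) = vX ∧ rword hu i = vX) :
    ∃ m, 1 ≤ m ∧ ∀ j, 1 ≤ j → rword hu j = vY → rword hu (j-1) = vX →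
      (∀ t, t < m → rword hu (j + t) = vY) ∧ rword hu (j + m) = vX := by
  set n := s.length with hn
  -- occurrences of s ++ [x]
  have hocc_sx : ∀ t, OccursAt u (s ++ [x]) t ↔ ∃ e, t = occ hu e ∧ rword hu e = vX := by
    intro t
    rw [occursAt_snoc]
    constructor
    · rintro ⟨h1, h2⟩
      obtain ⟨e, he⟩ := enum_surj hu h1
      refine ⟨e, he.symm, ?_⟩
      rcases hcover e with h | h
      · exact h
      · exact absurd (by rw [(show occ hu e = t from he)]; exact h2) (hYafter e h)
    · rintro ⟨e, rfl, he⟩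
      exact ⟨occ_occurs hu e, hXafter e he⟩
  have hsxfac : IsFactor u (s ++ [x]) := by
    obtain ⟨e0, -, he0⟩ := hXunb 0
    exact ⟨occ hu e0, (hocc_sx _).2 ⟨e0, rfl, he0⟩⟩
  have hu' : UnbddP (fun t => OccursAt u (s ++ [x]) t) := by
    intro t
    obtain ⟨e, het, he⟩ := hXunb t
    refine ⟨occ hu e, ?_, (hocc_sx _).2 ⟨e, rfl, he⟩⟩
    calc t < e := het
      _ ≤ enum hu e := enum_le_self hu e
      _ = occ hu e := rfl
  -- enumeration of the indices with value vX
  set h := enum hXunb with hh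
  have hhmem : ∀ f, rword hu (h f) = vX := fun f => enum_mem hXunb f
  have hhlt : ∀ f, h f < h (f + 1) := fun f => enum_lt_succ hXunb f
  -- occurrences of s++[x] are exactly the occ (h f)
  have hkh : ∀ f, occ hu' f = occ hu (h f) := by
    intro f
    induction f with
    | zero =>
      apply le_antisymm
      · exact enum_zero_le hu' ((hocc_sx _).2 ⟨h 0, rfl, hhmem 0⟩)
      · obtain ⟨e, he, hex⟩ := (hocc_sx _).1 (occ_occurs hu' 0)
        have : h 0 ≤ e := enum_zero_le hXunb hex
        calc occ hu (h 0) ≤ occ hu e := (occ_mono hu).monotone this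
          _ = occ hu' 0 := he.symm
    | succ f ih =>
      apply le_antisymm
      · -- occ hu' (f+1) is least occurrence greater than occ hu' f
        by_contra hcon
        push_neg at hcon
        have h1 : occ hu' f < occ hu (h (f+1)) := by
          rw [ih]
          exact (occ_mono hu) (hhlt f)
        have h2 := enum_not_between hu' h1 hcon
        exact h2 ((hocc_sx _).2 ⟨h (f+1), rfl, hhmem (f+1)⟩)
      · obtain ⟨e, he, hex⟩ := (hocc_sx _).1 (occ_occurs hu' (f+1))
        have h2 : occ hu (h f) < occ hu e := by
          rw [← ih]
          calc occ hu' f < occ hu' (f+1) := occ_lt_succ hu' f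
            _ = occ hu e := he
        have h3 : h f < e := (occ_mono hu).lt_iff_lt.1 h2
        have h4 : h (f + 1) ≤ e := by
          by_contra hcon
          push_neg at hcon
          exact (enum_not_between hXunb h3 hcon) hex
        calc occ hu (h (f+1)) ≤ occ hu e := (occ_mono hu).monotone h4
          _ = occ hu' (f+1) := he.symm
  -- the return words of s++[x] are the blocks
  set G := fun f => h (f + 1) - h f - 1 with hG
  have hblock : ∀ f, rword hu' f = Wblock vX vY (G f) := by
    intro f
    have hlen : h f + (h (f+1) - h f) = h (f+1) := by have := hhlt f; omega
    have h1 : rword hu' f = factorAt u (occ hu (h f)) (occ hu (h (f+1)) - occ hu (h f)) := by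
      rw [rword, hkh f, hkh (f+1)]
    rw [h1]
    have h2 := occ_factorAt_concat hu (h f) (h (f+1) - h f)
    rw [hlen] at h2
    rw [h2]
    have h3 : (List.range (h (f+1) - h f)).map (fun t => rword hu (h f + t))
        = vX :: List.replicate (G f) vY := by
      apply List.ext_getElem
      · have := hhlt f
        simp [hG]
        omega
      · intro i h1' h2'
        have hi : i < h (f+1) - h f := by simpa using h1'
        rw [List.getElem_map, List.getElem_range]
        rcases Nat.eq_zero_or_pos i with rfl | hip
        · simpa using hhmem f
        · obtain ⟨i', rfl⟩ : ∃ i', i = i' + 1 := ⟨i - 1, by omega⟩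
          have hiv : rword hu (h f + (i' + 1)) = vY := by
            rcases hcover (h f + (i' + 1)) with hc | hc
            · exfalso
              have := enum_not_between hXunb (show h f < h f + (i'+1) by omega)
                (show h f + (i'+1) < h (f+1) by omega)
              exact this hc
            · exact hc
          have hlt2 : i' < G f := by
            simp at h2'
            omega
          simp only [List.getElem_cons_succ, List.getElem_replicate]
          exact hiv
    rw [h3]
    simp [Wblock]
  -- count the gaps
  have hret := (hR (s ++ [x]) hsxfac).2
  rw [returnWords_eq_range hu'] at hret
  have hrange : Set.range (rword hu') = (Wblock vX vY) '' (Set.range G) := by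
    ext v
    constructor
    · rintro ⟨f, rfl⟩
      exact ⟨G f, ⟨f, rfl⟩, (hblock f).symm⟩
    · rintro ⟨m, ⟨f, rfl⟩, rfl⟩
      exact ⟨f, hblock f⟩
  rw [hrange, Set.ncard_image_of_injective _ (Wblock_injective hvY)] at hret
  obtain ⟨g1, g2, hg12, hgset⟩ := Set.ncard_eq_two.1 hret
  -- 0 is a gap
  have h0gap : (0 : ℕ) ∈ Set.range G := by
    obtain ⟨i, hi1, hi2, hi3⟩ := hXX
    obtain ⟨f, hf⟩ := enum_surj hXunb hi2
    rw [← hh] at hf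
    have hfi : h (f + 1) = i := by
      have ha : h f < i := by rw [hf]; omega
      have hb : h (f+1) ≤ i := by
        by_contra hcon
        push_neg at hcon
        exact (enum_not_between hXunb ha hcon) hi3
      have hc : h f < h (f+1) := hhlt f
      omega
    exact ⟨f, by show h (f + 1) - h f - 1 = 0; omega⟩
  -- the other gap m
  obtain ⟨m, hm0, hmem, hgap⟩ : ∃ m, m ≠ 0 ∧ m ∈ Set.range G ∧
      ∀ f, G f = 0 ∨ G f = m := by
    rw [hgset] at h0gap
    simp only [Set.mem_insert_iff, Set.mem_singleton_iff] at h0gap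
    rcases h0gap with h0 | h0
    · refine ⟨g2, by omega, ?_, ?_⟩
      · rw [hgset]; right; rfl
      · intro f
        have : G f ∈ Set.range G := ⟨f, rfl⟩
        rw [hgset] at this
        rcases this with hf | hf
        · left; rw [hf, ← h0]
        · right; exact hf
    · refine ⟨g1, by omega, ?_, ?_⟩
      · rw [hgset]; left; rfl
      · intro f
        have : G f ∈ Set.range G := ⟨f, rfl⟩
        rw [hgset] at this
        rcases this with hf | hf
        · right; exact hf
        · left; rw [hf, ← h0]
  refine ⟨m, by omega, ?_⟩
  intro j hj1 hjY hjX
  obtain ⟨f, hf⟩ := enum_surj hXunb hjX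
  rw [← hh] at hf
  have hup : h (f+1) = j + m := by
    have ha : h f < j := by rw [hf]; omega
    have hb : h (f+1) ≠ j := by
      intro hc
      rw [← hc] at hjY
      exact hne ((hhmem (f+1)).symm.trans hjY)
    have hc : h f < h (f+1) := hhlt f
    have hd : G f = h (f+1) - h f - 1 := rfl
    rcases hgap f with hg | hg
    · exfalso
      rw [hd] at hg
      apply hb
      omega
    · rw [hd] at hg
      omega
  constructor
  · intro t ht
    rcases hcover (j + t) with hc | hc
    · exfalso
      have := enum_not_between hXunb (show h f < j + t by omega)
        (show j + t < h (f+1) by omega)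
      exact this hc
    · exact hc
  · rw [← hup]
    exact hhmem (f+1)

open Classical
set_option linter.unusedSectionVars false
set_option maxHeartbeats 1000000

lemma pair_cover {α : Type*} {v1 v2 p q e : α} (hpq : p ≠ q)
    (hp : p = v1 ∨ p = v2) (hq : q = v1 ∨ q = v2) (he : e = v1 ∨ e = v2) :
    e = p ∨ e = q := by
  rcases hp with rfl | rfl <;> rcases hq with rfl | rfl <;> tauto

section RS

variable {u : ℕ → A} {w : List A} (hu : UnbddP (fun t => OccursAt u w t))

lemma rword_occurs (e : ℕ) : OccursAt u (rword hu e) (occ hu e) := by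
  rw [rword]
  exact occursAt_factorAt u _ _

lemma occ_succ_eq (e : ℕ) : occ hu (e + 1) = occ hu e + (rword hu e).length := by
  rw [rword_length]
  have := occ_lt_succ hu e
  omega

/-- the letter after the `e`-th occurrence is determined by the return word -/
lemma after_letter_eq {e e' : ℕ} (heq : rword hu e = rword hu e') :
    u (occ hu e + w.length) = u (occ hu e' + w.length) := by
  set n := w.length with hn
  have hlen : (rword hu e).length = (rword hu e').length := by rw [heq]
  rcases lt_or_ge n (rword hu e).length with h | h
  · have h1 := occursAt_getElem (rword_occurs hu e) (i := n) h
    have h2 := occursAt_getElem (rword_occurs hu e') (i := n) (hlen ▸ h)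
    rw [← h1, ← h2]
    exact List.getElem_of_eq heq h
  · set g := (rword hu e).length with hg
    have hgpos : 0 < g := rword_length_pos hu e
    have q1 : occ hu (e + 1) = occ hu e + g := occ_succ_eq hu e
    have q2 : occ hu (e' + 1) = occ hu e' + g := by rw [occ_succ_eq hu e', ← hlen]
    have e1 : occ hu e + n = occ hu (e+1) + (n - g) := by omega
    have e2 : occ hu e' + n = occ hu (e'+1) + (n - g) := by omega
    rw [e1, e2]
    have hb : n - g < w.length := by rw [← hn]; omega
    have h1 := occursAt_getElem (occ_occurs hu (e+1)) (i := n - g) hb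
    have h2 := occursAt_getElem (occ_occurs hu (e'+1)) (i := n - g) hb
    exact h1.symm.trans h2

/-- the letter before the `e+1`-st occurrence is determined by the return word -/
lemma before_letter_eq {e e' : ℕ} (heq : rword hu e = rword hu e') :
    u (occ hu (e + 1) - 1) = u (occ hu (e' + 1) - 1) := by
  set g := (rword hu e).length with hg
  have hlen : (rword hu e').length = g := by rw [← heq]
  have hgpos : 0 < g := rword_length_pos hu e
  have q1 : occ hu (e + 1) = occ hu e + g := occ_succ_eq hu e
  have q2 : occ hu (e' + 1) = occ hu e' + g := by rw [occ_succ_eq hu e', hlen]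
  have hb : g - 1 < (rword hu e).length := by omega
  have h1 := occursAt_getElem (rword_occurs hu e) (i := g - 1) hb
  have h2 := occursAt_getElem (rword_occurs hu e') (i := g - 1) (by rw [hlen]; omega)
  have e1 : occ hu (e + 1) - 1 = occ hu e + (g - 1) := by omega
  have e2 : occ hu (e' + 1) - 1 = occ hu e' + (g - 1) := by omega
  rw [e1, e2, ← h1, ← h2]
  exact List.getElem_of_eq heq hb

end RS

lemma no_strong_bispecial {u : ℕ → A} (hR : PropertyR u 2) {s : List A}
    (hs : IsFactor u s) {a b x y : A} (hab : a ≠ b) (hxy : x ≠ y)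
    (hax : IsFactor u (a :: (s ++ [x]))) (hay : IsFactor u (a :: (s ++ [y])))
    (hbx : IsFactor u (b :: (s ++ [x]))) (hby : IsFactor u (b :: (s ++ [y]))) : False := by
  have hrec := recurrent_of_R2 hR
  have hnEP := not_EP_of_R2 hR
  have hu : UnbddP (fun t => OccursAt u s t) := occ_unbdd hrec hs
  set n := s.length with hn
  obtain ⟨hfin, hcard⟩ := hR s hs
  rw [returnWords_eq_range hu] at hcard
  obtain ⟨v1, v2, hv12, hvset⟩ := Set.ncard_eq_two.1 hcard
  have hcover : ∀ e, rword hu e = v1 ∨ rword hu e = v2 := by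
    intro e
    have h1 : rword hu e ∈ Set.range (rword hu) := ⟨e, rfl⟩
    rw [hvset] at h1
    simpa using h1
  -- transitions realized beyond any bound
  have htrans : ∀ (c d : A), IsFactor u (c :: (s ++ [d])) → ∀ T, ∃ i, T < i ∧ 1 ≤ i ∧
      u (occ hu i - 1) = c ∧ u (occ hu i + n) = d := by
    intro c d hcd T
    obtain ⟨t, ht1, ht2⟩ := occ_unbdd hrec hcd (occ hu (T + 1))
    rw [occursAt_cons] at ht2
    obtain ⟨htc, ht3⟩ := ht2
    rw [occursAt_snoc] at ht3
    obtain ⟨hts, htd⟩ := ht3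
    obtain ⟨i, hi⟩ := enum_surj hu hts
    have hiv : occ hu i = t + 1 := hi
    have higt : T + 1 < i := by
      have : occ hu (T+1) < occ hu i := by omega
      exact (occ_mono hu).lt_iff_lt.1 this
    refine ⟨i, by omega, by omega, ?_, ?_⟩
    · rw [hiv]; simpa using htc
    · rw [hiv]
      rw [show t + 1 + n = t + 1 + s.length from rfl] at htd
      exact htd
  -- occurrences for the four extension pairs
  obtain ⟨iax, -, hiax1, hiaxa, hiaxx⟩ := htrans a x hax 0
  obtain ⟨iay, -, hiay1, hiaya, hiayy⟩ := htrans a y hay 0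
  obtain ⟨ibx, -, hibx1, hibxb, hibxx⟩ := htrans b x hbx 0
  set vX := rword hu iax with hvX
  set vY := rword hu iay with hvY
  have hXY : vX ≠ vY := by
    intro hc
    have := after_letter_eq hu (hc : rword hu iax = rword hu iay)
    rw [← hn] at this
    rw [hiaxx, hiayy] at this
    exact hxy this
  have hcoverXY : ∀ e, rword hu e = vX ∨ rword hu e = vY := by
    intro e
    exact pair_cover hXY (hcover iax) (hcover iay) (hcover e)
  have hXafter : ∀ e, rword hu e = vX → u (occ hu e + n) = x := by
    intro e he
    have := after_letter_eq hu (he : rword hu e = rword hu iax)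
    rw [← hn] at this
    rw [hiaxx] at this
    exact this
  have hYafter : ∀ e, rword hu e = vY → u (occ hu e + n) = y := by
    intro e he
    have := after_letter_eq hu (he : rword hu e = rword hu iay)
    rw [← hn] at this
    rw [hiayy] at this
    exact this
  -- the words before
  set vA := rword hu (iax - 1) with hvA
  set vB := rword hu (ibx - 1) with hvB
  have hAbef : ∀ e, rword hu e = vA → u (occ hu (e + 1) - 1) = a := by
    intro e he
    have := before_letter_eq hu (he : rword hu e = rword hu (iax - 1))
    rw [show iax - 1 + 1 = iax by omega] at this
    rw [hiaxa] at this
    exact this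
  have hBbef : ∀ e, rword hu e = vB → u (occ hu (e + 1) - 1) = b := by
    intro e he
    have := before_letter_eq hu (he : rword hu e = rword hu (ibx - 1))
    rw [show ibx - 1 + 1 = ibx by omega] at this
    rw [hibxb] at this
    exact this
  have hAB : vA ≠ vB := by
    intro hc
    have := hBbef (iax - 1) (hc : rword hu (iax - 1) = vB)
    rw [show iax - 1 + 1 = iax by omega, hiaxa] at this
    exact hab this
  have hcoverAB : ∀ e, rword hu e = vA ∨ rword hu e = vB := by
    intro e
    exact pair_cover hAB (hcover (iax - 1)) (hcover (ibx - 1)) (hcover e)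
  -- from an after-letter we can read off the value
  have hval_of_x : ∀ e, u (occ hu e + n) = x → rword hu e = vX := by
    intro e he
    rcases hcoverXY e with h | h
    · exact h
    · exact absurd (by rw [← hYafter e h]; exact he.symm) hxy
  have hval_of_y : ∀ e, u (occ hu e + n) = y → rword hu e = vY := by
    intro e he
    rcases hcoverXY e with h | h
    · exact absurd ((hXafter e h).symm.trans he) hxy
    · exact h
  have hval_of_a : ∀ e, u (occ hu (e+1) - 1) = a → rword hu e = vA := by
    intro e he
    rcases hcoverAB e with h | h
    · exact h
    · exact absurd ((hBbef e h).symm.trans he).symm hab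
  have hval_of_b : ∀ e, u (occ hu (e+1) - 1) = b → rword hu e = vB := by
    intro e he
    rcases hcoverAB e with h | h
    · exact absurd ((hAbef e h).symm.trans he) hab
    · exact h
  -- unboundedness of both values
  have hXunb : UnbddP (fun e => rword hu e = vX) := by
    intro T
    obtain ⟨i, hiT, hi1, -, hix⟩ := htrans a x hax T
    exact ⟨i, hiT, hval_of_x i hix⟩
  have hYunb : UnbddP (fun e => rword hu e = vY) := by
    intro T
    obtain ⟨i, hiT, hi1, -, hiy⟩ := htrans a y hay T
    exact ⟨i, hiT, hval_of_y i hiy⟩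
  -- nonemptiness of the words
  have hvXne : vX ≠ [] := by
    intro hc
    have := rword_length_pos hu iax
    rw [← hvX, hc] at this
    simp at this
  have hvYne : vY ≠ [] := by
    intro hc
    have := rword_length_pos hu iay
    rw [← hvY, hc] at this
    simp at this
  -- transitions between given values
  have htransVal : ∀ (vP vQ : List A), (vP = vA ∨ vP = vB) → (vQ = vX ∨ vQ = vY) →
      ∀ T, ∃ i, T < i ∧ 1 ≤ i ∧ rword hu (i - 1) = vP ∧ rword hu i = vQ := by
    intro vP vQ hP hQ T
    -- choose the letters
    have hc : ∃ c : A, (vP = vA → c = a) ∧ (vP = vB → c = b) ∧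
        ∀ e, u (occ hu (e+1) - 1) = c → rword hu e = vP := by
      rcases hP with rfl | rfl
      · exact ⟨a, fun _ => rfl, fun hc => absurd hc hAB, hval_of_a⟩
      · exact ⟨b, fun hc => absurd hc.symm hAB, fun _ => rfl, hval_of_b⟩
    have hd : ∃ d : A, (vQ = vX → d = x) ∧ (vQ = vY → d = y) ∧
        ∀ e, u (occ hu e + n) = d → rword hu e = vQ := by
      rcases hQ with rfl | rfl
      · exact ⟨x, fun _ => rfl, fun hc => absurd hc hXY, hval_of_x⟩
      · exact ⟨y, fun hc => absurd hc.symm hXY, fun _ => rfl, hval_of_y⟩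
    obtain ⟨c, hc1, hc2, hc3⟩ := hc
    obtain ⟨d, hd1, hd2, hd3⟩ := hd
    have hfac : IsFactor u (c :: (s ++ [d])) := by
      rcases hP with h1 | h1 <;> rcases hQ with h2 | h2
      · rw [hc1 h1, hd1 h2]; exact hax
      · rw [hc1 h1, hd2 h2]; exact hay
      · rw [hc2 h1, hd1 h2]; exact hbx
      · rw [hc2 h1, hd2 h2]; exact hby
    obtain ⟨i, hiT, hi1, hic, hid⟩ := htrans c d hfac T
    refine ⟨i, hiT, hi1, ?_, hd3 i hid⟩
    have := hc3 (i - 1) (by rw [show i - 1 + 1 = i by omega]; exact hic)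
    exact this
  -- relate the A/B names to the X/Y names
  have hABXY : (vA = vX ∨ vA = vY) ∧ (vB = vX ∨ vB = vY) :=
    ⟨hcoverXY (iax - 1), hcoverXY (ibx - 1)⟩
  have hXAB : (vX = vA ∨ vX = vB) ∧ (vY = vA ∨ vY = vB) :=
    ⟨hcoverAB iax, hcoverAB iay⟩
  -- self-transitions
  have hXX : ∃ i, 1 ≤ i ∧ rword hu (i - 1) = vX ∧ rword hu i = vX := by
    obtain ⟨i, -, h1, h2, h3⟩ := htransVal vX vX hXAB.1 (Or.inl rfl) 0
    exact ⟨i, h1, h2, h3⟩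
  have hYY : ∃ i, 1 ≤ i ∧ rword hu (i - 1) = vY ∧ rword hu i = vY := by
    obtain ⟨i, -, h1, h2, h3⟩ := htransVal vY vY hXAB.2 (Or.inr rfl) 0
    exact ⟨i, h1, h2, h3⟩
  -- gap structure both ways
  obtain ⟨m, hm1, hrunY⟩ := gap_struct hR hu hXY hvYne hcoverXY
    (by intro e he; rw [← hn]; exact hXafter e he)
    (by intro e he; rw [← hn]; rw [hYafter e he]; exact fun hc => hxy hc.symm)
    hXunb hXX
  obtain ⟨q, hq1, hrunX⟩ := gap_struct hR hu (Ne.symm hXY) hvXne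
    (fun e => (hcoverXY e).symm)
    (by intro e he; rw [← hn]; exact hYafter e he)
    (by intro e he; rw [← hn]; rw [hXafter e he]; exact hxy)
    hYunb hYY
  -- starting point : a (vY, vX) transition
  obtain ⟨i1, -, hi11, hi1Y, hi1X⟩ := htransVal vY vX hXAB.2 (Or.inl rfl) 0
  -- the step along one block
  have hstep : ∀ j, 1 ≤ j → rword hu j = vX → rword hu (j-1) = vY →
      ((∀ t, t < q → rword hu (j + t) = vX) ∧ (∀ t, t < m → rword hu (j + q + t) = vY)
        ∧ rword hu (j + q + m) = vX ∧ rword hu (j + q + m - 1) = vY) := by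
    intro j hj hjX hjY
    have h1 := hrunX j hj hjX hjY
    have h2 := hrunY (j + q) (by omega) h1.2
      (by rw [show j + q - 1 = j + (q-1) by omega]; exact h1.1 (q-1) (by omega))
    refine ⟨h1.1, h2.1, h2.2, ?_⟩
    rw [show j + q + m - 1 = (j + q) + (m - 1) by omega]
    exact h2.1 (m-1) (by omega)
  have hS : ∀ c, rword hu (i1 + c * (q + m)) = vX ∧ rword hu (i1 + c * (q + m) - 1) = vY := by
    intro c
    induction c with
    | zero =>
      constructor
      · simpa using hi1X
      · simpa using hi1Y
    | succ c ih =>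
      have hpos : 1 ≤ i1 + c * (q + m) := by omega
      have h := hstep (i1 + c * (q + m)) hpos ih.1 ih.2
      have e1 : i1 + (c+1) * (q + m) = i1 + c * (q + m) + q + m := by ring
      constructor
      · rw [e1]; exact h.2.2.1
      · rw [e1]; exact h.2.2.2
  have hpat : ∀ c t, t < q + m →
      rword hu (i1 + c * (q + m) + t) = (if t < q then vX else vY) := by
    intro c t ht
    have hpos : 1 ≤ i1 + c * (q + m) := by omega
    have h := hstep (i1 + c * (q + m)) hpos (hS c).1 (hS c).2
    by_cases h2 : t < q
    · rw [if_pos h2]; exact h.1 t h2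
    · rw [if_neg h2]
      rw [show i1 + c * (q + m) + t = i1 + c * (q + m) + q + (t - q) by omega]
      exact h.2.1 (t - q) (by omega)
  have hper : ∀ cc, rword hu (i1 + cc + (q + m)) = rword hu (i1 + cc) := by
    intro cc
    have hqm : 0 < q + m := by omega
    have hdm := Nat.div_add_mod cc (q + m)
    set c := cc / (q + m) with hc
    set t := cc % (q + m) with ht
    have htlt : t < q + m := Nat.mod_lt _ hqm
    have e1 : i1 + cc = i1 + c * (q + m) + t := by
      have h2 : (q + m) * c = c * (q + m) := Nat.mul_comm _ _
      omega
    have e2 : i1 + cc + (q + m) = i1 + (c + 1) * (q + m) + t := by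
      have h2 : (q + m) * c = c * (q + m) := Nat.mul_comm _ _
      have h3 : (c + 1) * (q + m) = c * (q + m) + (q + m) := by ring
      omega
    rw [e2, e1, hpat c t htlt, hpat (c+1) t htlt]
  have hlen_per : ∀ cc, (rword hu (i1 + cc + (q + m))).length = (rword hu (i1 + cc)).length := by
    intro cc; rw [hper]
  set L := occ hu (i1 + (q + m)) - occ hu i1 with hL
  have hLpos : 0 < L := by
    have := (occ_mono hu) (show i1 < i1 + (q + m) by omega)
    omega
  have hshift : ∀ cc, occ hu (i1 + cc + (q + m)) = occ hu (i1 + cc) + L := by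
    intro cc
    induction cc with
    | zero =>
      simp only [Nat.add_zero]
      have := (occ_mono hu).monotone (show i1 ≤ i1 + (q + m) by omega)
      rw [hL]
      omega
    | succ cc ih =>
      have e1 : i1 + (cc+1) + (q + m) = (i1 + cc + (q + m)) + 1 := by omega
      have e2 : i1 + (cc+1) = (i1 + cc) + 1 := by omega
      rw [e1, e2, occ_succ_eq hu, occ_succ_eq hu, ih, hlen_per cc]
      omega
  apply hnEP
  refine ⟨L, hLpos, occ hu i1, ?_⟩
  intro z hz
  have hz0 : occ hu 0 ≤ z :=
    le_trans ((occ_mono hu).monotone (Nat.zero_le i1)) hz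
  obtain ⟨e, he1, he2⟩ := enum_locate hu hz0
  have he1' : occ hu e ≤ z := he1
  have he2' : z < occ hu (e + 1) := he2
  have hei : i1 ≤ e := by
    by_contra hcon
    push_neg at hcon
    have : occ hu (e + 1) ≤ occ hu i1 := (occ_mono hu).monotone (by omega)
    omega
  obtain ⟨cc, rfl⟩ : ∃ cc, e = i1 + cc := ⟨e - i1, by omega⟩
  set dd := z - occ hu (i1 + cc) with hdd
  have hd : dd < (rword hu (i1 + cc)).length := by
    rw [rword_length]
    omega
  have hA := occursAt_getElem (rword_occurs hu (i1 + cc)) hd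
  have hz2 : z + L = occ hu (i1 + cc + (q + m)) + dd := by
    rw [hshift]
    omega
  have hd2 : dd < (rword hu (i1 + cc + (q + m))).length := by
    rw [hlen_per]
    exact hd
  have hB := occursAt_getElem (rword_occurs hu (i1 + cc + (q + m))) hd2
  calc u (z + L) = u (occ hu (i1 + cc + (q + m)) + dd) := by rw [hz2]
    _ = (rword hu (i1 + cc + (q + m)))[dd]'hd2 := hB.symm
    _ = (rword hu (i1 + cc))[dd]'hd := List.getElem_of_eq (hper cc) hd2
    _ = u (occ hu (i1 + cc) + dd) := hA
    _ = u z := by rw [hdd]; congr 1; omega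

open Classical
set_option linter.unusedSectionVars false
set_option maxHeartbeats 1000000

section Fwd
variable [Fintype A]

lemma rs_tail {u : ℕ → A} {c : A} {tl : List A} (h : RightSpecial u (c :: tl)) :
    RightSpecial u tl := by
  rw [RightSpecial] at *
  have hsub : rightExt u (c :: tl) ⊆ rightExt u tl := by
    intro b hb
    have hb2 : IsFactor u ((c :: tl) ++ [b]) := hb
    have h2 := isFactor_drop hb2 1
    exact (by simpa using h2 : IsFactor u (tl ++ [b]))
  calc 2 ≤ _ := h
    _ ≤ _ := Set.ncard_le_ncard hsub (Set.toFinite _)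

lemma atMostOne_rs (hcard : Fintype.card A = 2) {u : ℕ → A} (hR : PropertyR u 2) :
    ∀ l (w w' : List A), w.length = l → IsFactor u w → RightSpecial u w →
      w'.length = l → IsFactor u w' → RightSpecial u w' → w = w' := by
  intro l
  induction l with
  | zero =>
    intro w w' h1 _ _ h2 _ _
    rw [List.length_eq_zero_iff] at h1 h2
    rw [h1, h2]
  | succ l ih =>
    intro w w' h1 hf hs h2 hf' hs'
    obtain ⟨c, tl, rfl⟩ : ∃ c tl, w = c :: tl := by
      cases w with
      | nil => simp at h1
      | cons c tl => exact ⟨c, tl, rfl⟩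
    obtain ⟨c', tl', rfl⟩ : ∃ c' tl', w' = c' :: tl' := by
      cases w' with
      | nil => simp at h2
      | cons c tl => exact ⟨c, tl, rfl⟩
    have htlf : IsFactor u tl := by have := isFactor_drop hf 1; simpa using this
    have htlf' : IsFactor u tl' := by have := isFactor_drop hf' 1; simpa using this
    have htl : tl = tl' := ih tl tl' (by simpa using h1) htlf (rs_tail hs)
      (by simpa using h2) htlf' (rs_tail hs')
    subst htl
    by_cases hcc : c = c'
    · rw [hcc]
    · exfalso
      have huniv : ∀ cc : A, RightSpecial u (cc :: tl) → ∀ b : A,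
          IsFactor u ((cc :: tl) ++ [b]) := by
        intro cc hscc b
        have h3 : (rext u (cc :: tl)).card = 2 :=
          le_antisymm (rext_card_le hcard u _) (rightSpecial_iff_card.1 hscc)
        have h4 : rext u (cc :: tl) = Finset.univ :=
          Finset.eq_univ_of_card _ (by rw [h3, hcard])
        have h5 : b ∈ rext u (cc :: tl) := by rw [h4]; exact Finset.mem_univ b
        exact mem_rext.1 h5
      obtain ⟨x, y, hxy⟩ : ∃ x y : A, x ≠ y :=
        Fintype.exists_pair_of_one_lt_card (by omega)
      exact no_strong_bispecial hR htlf hcc hxy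
        (huniv c hs x) (huniv c hs y) (huniv c' hs' x) (huniv c' hs' y)

lemma exists_rs {u : ℕ → A} (hnEP : ¬ EventuallyPeriodic u) (l : ℕ) :
    ∃ w, IsFactor u w ∧ w.length = l ∧ RightSpecial u w := by
  by_contra hcon
  push_neg at hcon
  exact hnEP (mh_of_no_rs (fun w hf hl => hcon w hf hl))

lemma complexity_of_R2 (hcard : Fintype.card A = 2) {u : ℕ → A} (hR : PropertyR u 2) :
    ∀ n, Complexity u n = n + 1 := by
  have hnEP := not_EP_of_R2 hR
  intro n
  induction n with
  | zero => exact complexity_zero u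
  | succ n ih =>
    rw [complexity_succ_rs hcard u n, ih]
    congr 1
    obtain ⟨w0, hw0f, hw0l, hw0s⟩ := exists_rs hnEP n
    rw [Finset.card_eq_one]
    refine ⟨w0, ?_⟩
    ext v
    simp only [Finset.mem_filter, Finset.mem_singleton, mem_factorsFinset]
    constructor
    · rintro ⟨⟨hl, hf⟩, hs⟩
      exact atMostOne_rs hcard hR n v w0 hl hf hs hw0l hw0f hw0s
    · rintro rfl
      exact ⟨⟨hw0l, hw0f⟩, hw0s⟩

end Fwd

open Classical
set_option linter.unusedSectionVars false
set_option maxHeartbeats 1000000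

/-! ### common suffixes of complete return words -/

def CSuf (u : ℕ → A) (p p' t : ℕ) : Prop := ∀ d, d < t → u (p - t + d) = u (p' - t + d)

lemma csuf_symm {u : ℕ → A} {p p' t : ℕ} (h : CSuf u p p' t) : CSuf u p' p t :=
  fun d hd => (h d hd).symm

lemma csuf_trans {u : ℕ → A} {p p' p'' t : ℕ} (h : CSuf u p p' t) (h' : CSuf u p' p'' t) :
    CSuf u p p'' t := fun d hd => (h d hd).trans (h' d hd)

lemma csuf_mono {u : ℕ → A} {p p' t s : ℕ} (h : CSuf u p p' t) (hs : s ≤ t)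
    (hp : t ≤ p) (hp' : t ≤ p') : CSuf u p p' s := by
  intro d hd
  have e1 : p - s + d = p - t + (t - s + d) := by omega
  have e2 : p' - s + d = p' - t + (t - s + d) := by omega
  rw [e1, e2]
  exact h (t - s + d) (by omega)

lemma csuf_succ {u : ℕ → A} {p p' t : ℕ} (h : CSuf u p p' t)
    (hl : u (p - (t+1)) = u (p' - (t+1))) (hp : t + 1 ≤ p) (hp' : t + 1 ≤ p') :
    CSuf u p p' (t+1) := by
  intro d hd
  rcases Nat.eq_zero_or_pos d with rfl | hdpos
  · simpa using hl
  · obtain ⟨d', rfl⟩ : ∃ d', d = d' + 1 := ⟨d - 1, by omega⟩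
    have e1 : p - (t+1) + (d'+1) = p - t + d' := by omega
    have e2 : p' - (t+1) + (d'+1) = p' - t + d' := by omega
    rw [e1, e2]
    exact h d' (by omega)

lemma csuf_letter {u : ℕ → A} {p p' t : ℕ} (h : CSuf u p p' (t+1)) :
    u (p - (t+1)) = u (p' - (t+1)) := by
  have := h 0 (by omega)
  simpa using this

/-! ### return word witnesses -/

structure RWit (u : ℕ → A) (w : List A) where
  j : ℕ
  k : ℕ
  hjk : j < k
  hj : OccursAt u w j
  hk : OccursAt u w k
  hbet : ∀ l, j < l → l < k → ¬ OccursAt u w l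

namespace RWit

variable {u : ℕ → A} {w : List A}

def len (W : RWit u w) : ℕ := W.k - W.j

def word (W : RWit u w) : List A := factorAt u W.j W.len

lemma len_pos (W : RWit u w) : 0 < W.len := by have := W.hjk; unfold len; omega

lemma kj (W : RWit u w) : W.k = W.j + W.len := by have := W.hjk; unfold len; omega

/-- common suffix length of the complete return words of two witnesses -/
noncomputable def T (W W' : RWit u w) : ℕ :=
  Nat.findGreatest (fun t => CSuf u (W.k + w.length) (W'.k + w.length) t)
    (min (W.len + w.length) (W'.len + w.length))

lemma csuf_base (W W' : RWit u w) : CSuf u (W.k + w.length) (W'.k + w.length) w.length := by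
  intro d hd
  have e1 : W.k + w.length - w.length + d = W.k + d := by omega
  have e2 : W'.k + w.length - w.length + d = W'.k + d := by omega
  rw [e1, e2, ← occursAt_getElem W.hk hd, ← occursAt_getElem W'.hk hd]

lemma T_ge (W W' : RWit u w) : w.length ≤ T W W' := by
  apply Nat.le_findGreatest
  · have := W.len_pos; have := W'.len_pos
    omega
  · exact csuf_base W W'

lemma T_le (W W' : RWit u w) : T W W' ≤ min (W.len + w.length) (W'.len + w.length) :=
  Nat.findGreatest_le _

lemma T_csuf (W W' : RWit u w) : CSuf u (W.k + w.length) (W'.k + w.length) (T W W') :=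
  Nat.findGreatest_spec (m := w.length)
    (by have := W.len_pos; have := W'.len_pos; omega) (csuf_base W W')

lemma T_not_csuf (W W' : RWit u w)
    (h : T W W' + 1 ≤ min (W.len + w.length) (W'.len + w.length)) :
    ¬ CSuf u (W.k + w.length) (W'.k + w.length) (T W W' + 1) :=
  Nat.findGreatest_is_greatest (Nat.lt_succ_self _) h

lemma T_comm (W W' : RWit u w) : T W W' = T W' W := by
  unfold T
  rw [min_comm]
  congr 1
  funext t
  exact propext ⟨csuf_symm, csuf_symm⟩

/-- the complete return word of `W'` is not a suffix of that of `W` (they branch) -/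
lemma T_lt_left (W W' : RWit u w) (hne : W.word ≠ W'.word) :
    T W W' < W.len + w.length := by
  rcases lt_or_ge (W'.len + w.length) (W.len + w.length) with h | h
  · have := T_le W W'
    omega
  -- W.len + w.length ≤ W'.len + w.length, so the bound is W.len + w.length
  by_contra hcon
  push_neg at hcon
  have hT : T W W' = W.len + w.length := le_antisymm (by have := T_le W W'; omega) hcon
  have hcs := T_csuf W W'
  rw [hT] at hcs
  -- w occurs at o := W'.k - W.len
  have hagree : ∀ d, d < W.len + w.length → u (W.j + d) = u (W'.k - W.len + d) := by
    intro d hd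
    have e1 : W.k + w.length - (W.len + w.length) + d = W.j + d := by
      have := W.kj; omega
    have e2 : W'.k + w.length - (W.len + w.length) + d = W'.k - W.len + d := by
      have := W'.kj; omega
    rw [← e1, ← e2]
    exact hcs d hd
  rcases eq_or_lt_of_le (show W.len ≤ W'.len by omega) with heq | hlt
  · -- equal lengths: the words are equal, contradiction
    apply hne
    unfold word
    rw [← heq]
    apply List.ext_getElem (by simp)
    intro i h1 h2
    rw [factorAt_getElem u W.j W.len i (by simpa using h1),
      factorAt_getElem u W'.j W.len i (by simpa using h1)]
    have := hagree i (by have := W.len_pos; simp at h1; omega)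
    rw [this]
    congr 1
    have h3 := W'.kj
    omega
  · -- strict: occurrence of w strictly between W'.j and W'.k
    have hocc : OccursAt u w (W'.k - W.len) := by
      apply occursAt_of_agree W.hj
      intro i hi
      exact (hagree i (by omega)).symm
    exact W'.hbet (W'.k - W.len)
      (by have := W'.kj; omega)
      (by have := W'.kj; have := W'.len_pos; have := W.len_pos; omega) hocc

end RWit

/-! ### branch factors are left special -/

lemma factorAt_cons_sub (u : ℕ → A) {p t : ℕ} (hp : t + 1 ≤ p) :
    u (p - (t+1)) :: factorAt u (p - t) t = factorAt u (p - (t+1)) (t+1) := by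
  apply List.ext_getElem (by simp)
  intro i h1 h2
  rcases Nat.eq_zero_or_pos i with rfl | hip
  · rw [List.getElem_cons_zero, factorAt_getElem u _ _ 0 (by omega)]
    congr 1 <;> omega
  · obtain ⟨i', rfl⟩ : ∃ i', i = i' + 1 := ⟨i - 1, by omega⟩
    rw [List.getElem_cons_succ, factorAt_getElem u _ _ i' (by simp at h1; omega),
      factorAt_getElem u _ _ (i'+1) (by simp at h2; omega)]
    congr 1 <;> omega

lemma csuf_factorAt_eq {u : ℕ → A} {p p' t : ℕ} (h : CSuf u p p' t) :
    factorAt u (p - t) t = factorAt u (p' - t) t := by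
  apply List.ext_getElem (by simp)
  intro i h1 h2
  rw [factorAt_getElem u _ _ i (by simpa using h1), factorAt_getElem u _ _ i (by simpa using h1)]
  exact h i (by simpa using h1)

namespace RWit

variable [Fintype A] {u : ℕ → A} {w : List A}

omit [Fintype A] in
lemma branch_ne (W W' : RWit u w) (hne : W.word ≠ W'.word) :
    u (W.k + w.length - (T W W' + 1)) ≠ u (W'.k + w.length - (T W W' + 1)) := by
  intro hc
  have h1 := T_csuf W W'
  have hlt1 : T W W' < W.len + w.length := T_lt_left W W' hne
  have hlt2 : T W W' < W'.len + w.length := by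
    rw [T_comm W W']
    exact T_lt_left W' W (Ne.symm hne)
  have hkj := W.kj
  have hkj' := W'.kj
  have hcs := csuf_succ h1 hc (by omega) (by omega)
  exact T_not_csuf W W' (by omega) hcs

lemma branch_LS (W W' : RWit u w) (hne : W.word ≠ W'.word) :
    LeftSpecial u (factorAt u (W.k + w.length - T W W') (T W W')) := by
  set n := w.length with hn
  set t := T W W' with ht
  have hlt1 : t < W.len + n := T_lt_left W W' hne
  have hlt2 : t < W'.len + n := by
    rw [ht, T_comm W W']
    exact T_lt_left W' W (Ne.symm hne)
  have hkj := W.kj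
  have hkj' := W'.kj
  have hbne := branch_ne W W' hne
  have hcs := T_csuf W W'
  have h1 : IsFactor u (u (W.k + n - (t+1)) :: factorAt u (W.k + n - t) t) := by
    rw [factorAt_cons_sub u (by omega)]
    exact isFactor_factorAt u _ _
  have heq2 : factorAt u (W.k + n - t) t = factorAt u (W'.k + n - t) t :=
    csuf_factorAt_eq hcs
  have h2 : IsFactor u (u (W'.k + n - (t+1)) :: factorAt u (W.k + n - t) t) := by
    rw [heq2, factorAt_cons_sub u (by omega)]
    exact isFactor_factorAt u _ _
  rw [LeftSpecial]
  have hsub : ({u (W.k + n - (t+1)), u (W'.k + n - (t+1))} : Set A)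
      ⊆ leftExt u (factorAt u (W.k + n - t) t) := by
    intro c hc
    rcases hc with rfl | rfl
    · exact h1
    · exact h2
  calc 2 = ({u (W.k + n - (t+1)), u (W'.k + n - (t+1))} : Set A).ncard :=
      (Set.ncard_pair hbne).symm
    _ ≤ _ := Set.ncard_le_ncard hsub (Set.toFinite _)

/-- the final contradiction: a smaller and a bigger branch point -/
lemma final_step (hcard : Fintype.card A = 2)
    (hC : ∀ n, Complexity u n = n + 1) (hrec : Recurrent u)
    (WS WS' WB WB' : RWit u w)
    (hS : WS.word ≠ WS'.word) (hB : WB.word ≠ WB'.word)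
    (hTlt : T WS WS' < T WB WB') : False := by
  set n := w.length with hn
  set t := T WS WS' with ht
  set t' := T WB WB' with ht'
  have htn : n ≤ t := T_ge WS WS'
  have ht'B1 : t' < WB.len + n := T_lt_left WB WB' hB
  have ht'B2 : t' < WB'.len + n := by
    rw [ht', T_comm WB WB']
    exact T_lt_left WB' WB (Ne.symm hB)
  have hkjB := WB.kj
  have hlenposB := WB.len_pos
  have hz1 := branch_LS WS WS' hS
  have hz2 := branch_LS WB WB' hB
  have hprefLS : LeftSpecial u (factorAt u (WB.k + n - t') t) := by
    rw [LeftSpecial]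
    have hsub : leftExt u (factorAt u (WB.k + n - t') t')
        ⊆ leftExt u (factorAt u (WB.k + n - t') t) := by
      intro c hc
      have hcf : IsFactor u (c :: factorAt u (WB.k + n - t') t') := hc
      have h3 := isFactor_take hcf (t + 1)
      rw [List.take_succ_cons, factorAt_take u _ _ _ (le_of_lt hTlt)] at h3
      exact h3
    calc 2 ≤ (leftExt u (factorAt u (WB.k + n - t') t')).ncard := hz2
      _ ≤ _ := Set.ncard_le_ncard hsub (Set.toFinite _)
  have hzeq : factorAt u (WS.k + n - t) t = factorAt u (WB.k + n - t') t := by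
    apply atMostOne_leftSpecial hcard hC hrec (l := t)
    · simp
    · exact isFactor_factorAt u _ _
    · exact hz1
    · simp
    · exact isFactor_factorAt u _ _
    · exact hprefLS
  have hpoint : ∀ d, d < t → u (WS.k + n - t + d) = u (WB.k + n - t' + d) := by
    intro d hd
    have h1 := factorAt_getElem u (WS.k + n - t) t d hd
    have h2 := factorAt_getElem u (WB.k + n - t') t d hd
    rw [← h1, ← h2]
    exact List.getElem_of_eq hzeq (by simpa using hd)
  have hbS : t ≤ WS.k + n := by
    have h4 := T_lt_left WS WS' hS
    have h5 := WS.kj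
    omega
  have hagree : ∀ i, i < n → u ((WB.k + n - t') + (t - n) + i) = u (WS.k + i) := by
    intro i hi
    have h1 := hpoint (t - n + i) (by omega)
    have e1 : WS.k + n - t + (t - n + i) = WS.k + i := by omega
    have e2 : WB.k + n - t' + (t - n + i) = WB.k + n - t' + (t - n) + i := by omega
    rw [e1, e2] at h1
    exact h1.symm
  have hocc : OccursAt u w (WB.k + n - t' + (t - n)) := by
    apply occursAt_of_agree WS.hk
    intro i hi
    exact hagree i (by rw [hn]; exact hi)
  have hP1 : WB.j < WB.k + n - t' + (t - n) := by omega
  have hP2 : WB.k + n - t' + (t - n) < WB.k := by omega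
  exact WB.hbet _ hP1 hP2 hocc

end RWit

namespace RWit

variable [Fintype A] {u : ℕ → A} {w : List A}

lemma key3 (hcard : Fintype.card A = 2)
    (hC : ∀ n, Complexity u n = n + 1) (hrec : Recurrent u)
    (W1 W2 W3 : RWit u w)
    (h12 : W1.word ≠ W2.word) (h13 : W1.word ≠ W3.word) (h23 : W2.word ≠ W3.word)
    (hmin1 : T W1 W2 ≤ T W1 W3) (hmin2 : T W1 W2 ≤ T W2 W3) : False := by
  set n := w.length with hn
  set t := T W1 W2 with ht
  rcases eq_or_lt_of_le hmin1 with heq | hlt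
  · -- T13 = t : show T23 > t then finish with big pair (2,3)
    have hb12 := branch_ne W1 W2 h12
    have hb13 := branch_ne W1 W3 h13
    rw [← heq] at hb13
    have hbb : u (W2.k + n - (t+1)) = u (W3.k + n - (t+1)) :=
      two_of_three hcard hb12 hb13
    have hcs12 := T_csuf W1 W2
    have hcs13 := T_csuf W1 W3
    rw [← heq] at hcs13
    have hcs23 : CSuf u (W2.k + n) (W3.k + n) t := csuf_trans (csuf_symm hcs12) hcs13
    have hk2 := W2.kj
    have hk3 := W3.kj
    have hl2 : t < W2.len + n := by
      rw [ht, T_comm W1 W2]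
      exact T_lt_left W2 W1 (Ne.symm h12)
    have hl3 : t < W3.len + n := by
      rw [heq, T_comm W1 W3]
      exact T_lt_left W3 W1 (Ne.symm h13)
    have hcs23' : CSuf u (W2.k + n) (W3.k + n) (t+1) :=
      csuf_succ hcs23 hbb (by omega) (by omega)
    have hT23 : t + 1 ≤ T W2 W3 := Nat.le_findGreatest (by omega) hcs23'
    exact final_step hcard hC hrec W1 W2 W2 W3 h12 h23 (by omega)
  · exact final_step hcard hC hrec W1 W2 W1 W3 h12 h13 hlt

lemma not_three (hcard : Fintype.card A = 2)
    (hC : ∀ n, Complexity u n = n + 1) (hrec : Recurrent u)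
    (W1 W2 W3 : RWit u w)
    (h12 : W1.word ≠ W2.word) (h13 : W1.word ≠ W3.word) (h23 : W2.word ≠ W3.word) :
    False := by
  rcases le_total (T W1 W2) (T W1 W3) with a1 | a1
  · rcases le_total (T W1 W2) (T W2 W3) with a2 | a2
    · exact key3 hcard hC hrec W1 W2 W3 h12 h13 h23 a1 a2
    · apply key3 hcard hC hrec W2 W3 W1 h23 (Ne.symm h12) (Ne.symm h13)
      · rw [T_comm W2 W1]; exact a2
      · rw [T_comm W3 W1]; exact le_trans a2 a1
  · rcases le_total (T W1 W3) (T W2 W3) with a2 | a2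
    · refine key3 hcard hC hrec W1 W3 W2 h13 h12 (Ne.symm h23) a1 ?_
      rw [T_comm W3 W2]; exact a2
    · apply key3 hcard hC hrec W2 W3 W1 h23 (Ne.symm h12) (Ne.symm h13)
      · rw [T_comm W2 W1]; exact le_trans a2 a1
      · rw [T_comm W3 W1]; exact a2

end RWit

noncomputable def RWit.ofIdx {u : ℕ → A} {w : List A}
    (hu : UnbddP (fun t => OccursAt u w t)) (e : ℕ) : RWit u w :=
  ⟨occ hu e, occ hu (e+1), occ_lt_succ hu e, occ_occurs hu e, occ_occurs hu (e+1),
    fun _ h1 h2 => enum_not_between hu h1 h2⟩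

lemma RWit.ofIdx_word {u : ℕ → A} {w : List A}
    (hu : UnbddP (fun t => OccursAt u w t)) (e : ℕ) :
    (RWit.ofIdx hu e).word = rword hu e := rfl

lemma ep_of_single {u : ℕ → A} {w : List A} (hu : UnbddP (fun t => OccursAt u w t))
    (hcon : ∀ e, rword hu e = rword hu 0) : EventuallyPeriodic u := by
  set L := (rword hu 0).length with hL
  have hLpos : 0 < L := by rw [hL]; exact rword_length_pos hu 0
  refine ⟨L, hLpos, occ hu 0, ?_⟩
  intro z hz
  obtain ⟨e, he1, he2⟩ := enum_locate hu hz
  have he1' : occ hu e ≤ z := he1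
  have he2' : z < occ hu (e+1) := he2
  have hlen : ∀ e', (rword hu e').length = L := by intro e'; rw [hcon e', hL]
  have h1 : occ hu (e+1) = occ hu e + L := by rw [occ_succ_eq hu, hlen]
  set dd := z - occ hu e with hdd
  have hd1 : dd < (rword hu e).length := by rw [hlen]; omega
  have hd2 : dd < (rword hu (e+1)).length := by rw [hlen]; omega
  have hA := occursAt_getElem (rword_occurs hu e) hd1
  have hB := occursAt_getElem (rword_occurs hu (e+1)) hd2
  have hre : rword hu (e+1) = rword hu e := by rw [hcon (e+1), hcon e]
  calc u (z + L) = u (occ hu (e+1) + dd) := by congr 1; omega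
    _ = (rword hu (e+1))[dd]'hd2 := hB.symm
    _ = (rword hu e)[dd]'hd1 := List.getElem_of_eq hre hd2
    _ = u (occ hu e + dd) := hA
    _ = u z := by congr 1; omega

lemma recurrent_of_sturmian [Fintype A] (hcard : Fintype.card A = 2) {u : ℕ → A}
    (hnEP : ¬ EventuallyPeriodic u) (hC : ∀ n, Complexity u n = n + 1) :
    Recurrent u := by
  intro w hw
  by_contra hcon
  push_neg at hcon
  obtain ⟨j0, hj0⟩ := hw
  set B := j0 + 1 with hB
  set u' := fun x => u (x + B) with hu'
  have htocc : ∀ (v : List A) (j : ℕ), OccursAt u' v j → OccursAt u v (j + B) := by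
    intro v j hj
    rw [occursAt_iff] at hj ⊢
    intro i hi
    rw [hj i hi]
    show u (j + i + B) = u (j + B + i)
    congr 1
    omega
  have hfac' : ∀ v, IsFactor u' v → IsFactor u v := by
    rintro v ⟨j, hj⟩
    exact ⟨j + B, htocc v j hj⟩
  set m := w.length with hm
  have hwmem : w ∈ factorsFinset u m := mem_factorsFinset.2 ⟨rfl, ⟨j0, hj0⟩⟩
  have hsub : factorsFinset u' m ⊆ (factorsFinset u m).erase w := by
    intro v hv
    obtain ⟨hvl, hvf⟩ := mem_factorsFinset.1 hv
    rw [Finset.mem_erase]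
    constructor
    · intro hvw
      subst hvw
      obtain ⟨j, hj⟩ := hvf
      exact hcon j0 (j + B) (by omega) hj0 (htocc v j hj)
    · exact mem_factorsFinset.2 ⟨hvl, hfac' v hvf⟩
  have hCu' : Complexity u' m ≤ m := by
    rw [complexity_eq_card]
    calc (factorsFinset u' m).card ≤ ((factorsFinset u m).erase w).card :=
        Finset.card_le_card hsub
      _ = (factorsFinset u m).card - 1 := Finset.card_erase_of_mem hwmem
      _ = m := by rw [← complexity_eq_card, hC m]; omega
  have hex : ∃ m', Complexity u' (m'+1) ≤ Complexity u' m' := by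
    by_contra hcon2
    push_neg at hcon2
    have hgrow : ∀ i, i + 1 ≤ Complexity u' i := by
      intro i
      induction i with
      | zero => rw [complexity_zero u']
      | succ i ih =>
        have := hcon2 i
        omega
    have := hgrow m
    omega
  obtain ⟨m', hm'⟩ := hex
  have heq := complexity_succ_rs hcard u' m'
  have hno : ∀ v, IsFactor u' v → v.length = m' → ¬ RightSpecial u' v := by
    intro v hvf hvl hvs
    have hmem : v ∈ (factorsFinset u' m').filter (fun w => RightSpecial u' w) :=
      Finset.mem_filter.2 ⟨mem_factorsFinset.2 ⟨hvl, hvf⟩, hvs⟩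
    have hpos : 0 < ((factorsFinset u' m').filter (fun w => RightSpecial u' w)).card :=
      Finset.card_pos.2 ⟨v, hmem⟩
    omega
  have hEP' := mh_of_no_rs hno
  obtain ⟨p, hp, N, hN⟩ := hEP'
  apply hnEP
  refine ⟨p, hp, N + B, fun z hz => ?_⟩
  have h2 := hN (z - B) (by omega)
  show u (z + p) = u z
  have e1 : z - B + p + B = z + p := by omega
  have e2 : z - B + B = z := by omega
  rw [hu'] at h2
  simp only [] at h2
  rw [e1, e2] at h2
  exact h2

theorem R2_of_sturmian [Fintype A] (hcard : Fintype.card A = 2) {u : ℕ → A}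
    (hnEP : ¬ EventuallyPeriodic u) (hC : ∀ n, Complexity u n = n + 1) :
    PropertyR u 2 := by
  have hrec : Recurrent u := recurrent_of_sturmian hcard hnEP hC
  intro w hw
  have hu := occ_unbdd hrec hw
  have hex2 : ∃ e, rword hu e ≠ rword hu 0 := by
    by_contra hcon
    push_neg at hcon
    exact hnEP (ep_of_single hu hcon)
  obtain ⟨e0, he0⟩ := hex2
  have hset : returnWords u w = {rword hu 0, rword hu e0} := by
    rw [returnWords_eq_range hu]
    ext v
    simp only [Set.mem_range, Set.mem_insert_iff, Set.mem_singleton_iff]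
    constructor
    · rintro ⟨e, rfl⟩
      by_contra hv
      push_neg at hv
      obtain ⟨hv0, hve0⟩ := hv
      exact RWit.not_three hcard hC hrec (RWit.ofIdx hu 0) (RWit.ofIdx hu e0) (RWit.ofIdx hu e)
        (by rw [RWit.ofIdx_word, RWit.ofIdx_word]; exact Ne.symm he0)
        (by rw [RWit.ofIdx_word, RWit.ofIdx_word]; exact Ne.symm hv0)
        (by rw [RWit.ofIdx_word, RWit.ofIdx_word]; exact Ne.symm hve0)
    · rintro (rfl | rfl)
      · exact ⟨0, rfl⟩
      · exact ⟨e0, rfl⟩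
  rw [hset]
  exact ⟨Set.toFinite _, Set.ncard_pair (Ne.symm he0)⟩

/-- Vuillon: An infinite word over a two-letter alphabet satisfies
property `R_2` if and only if it is Sturmian, i.e., aperiodic with complexity
`C(n) = n + 1` for all `n`. -/
theorem propertyR_two_iff_sturmian [Fintype A] (hcard : Fintype.card A = 2)
    (u : ℕ → A) :
    PropertyR u 2 ↔ (¬ EventuallyPeriodic u ∧ ∀ n, Complexity u n = n + 1) := by
  constructor
  · intro hR
    exact ⟨not_EP_of_R2 hR, complexity_of_R2 hcard hR⟩
  · rintro ⟨hnEP, hC⟩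
    exact R2_of_sturmian hcard hnEP hC
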